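/- arXiv:2010.16094 — 11 statements merged into one kernel-verified Lean document; each statement's English description precedes it below -/
import Mathlib

section
/- Let m ≥ 1, d ≥ 1 and let Q be a d×d complex generalized permutation matrix of order m (each row and each column of Q contains exactly one nonzero entry, and every nonzero entry is an m-th root of unity). Then for every 1 ≤ j ≤ d and all j-combinations σ, τ, ν of {0,…,d−1}: det((Q^†)_{τ,σ}) · det(Q_{σ,ν}) = |det(Q_{σ,τ})| if τ = ν, and det((Q^†)_{τ,σ}) · det(Q_{σ,ν}) = 0 if τ ≠ ν, where Q^† denotes the conjugate transpose of Q. -/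
open Classical Matrix

/-- A `d × d` complex generalized permutation matrix of order `m`: each row and each
column contains exactly one nonzero entry, and every nonzero entry is an `m`-th root
of unity. -/
def IsGenPermMatrix (m d : ℕ) (Q : Matrix (Fin d) (Fin d) ℂ) : Prop :=
  (∀ i, ∃! j, Q i j ≠ 0) ∧ (∀ j, ∃! i, Q i j ≠ 0) ∧
  ∀ i j, Q i j ≠ 0 → Q i j ^ m = 1

namespace GPMaux

variable {m d : ℕ} {Q : Matrix (Fin d) (Fin d) ℂ}

noncomputable def pi (hQ : IsGenPermMatrix m d Q) (i : Fin d) : Fin d :=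
  (hQ.1 i).choose

lemma pi_spec (hQ : IsGenPermMatrix m d Q) (i : Fin d) : Q i (pi hQ i) ≠ 0 :=
  (hQ.1 i).choose_spec.1

lemma eq_pi (hQ : IsGenPermMatrix m d Q) {i k : Fin d} (h : Q i k ≠ 0) : k = pi hQ i :=
  (hQ.1 i).choose_spec.2 k h

lemma pi_inj (hQ : IsGenPermMatrix m d Q) : Function.Injective (pi hQ) := by
  intro i i' h
  obtain ⟨i0, _, hu⟩ := hQ.2.1 (pi hQ i)
  have h1 := hu i (pi_spec hQ i)
  have h2 := hu i' (by rw [h]; exact pi_spec hQ i')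
  rw [h1, h2]

lemma abs_eq_one (hm : 1 ≤ m) {z : ℂ} (h : z ^ m = 1) : ‖z‖ = 1 := by
  have h1 : ‖z‖ ^ m = 1 := by
    rw [← norm_pow, h, norm_one]
  have hnn : 0 ≤ ‖z‖ := norm_nonneg z
  rcases lt_trichotomy (‖z‖) 1 with hlt | heq | hgt
  · exact absurd h1 (by have := pow_lt_one₀ hnn hlt (by omega : m ≠ 0); linarith)
  · exact heq
  · exact absurd h1 (by have := one_lt_pow₀ hgt (by omega : m ≠ 0); linarith)

lemma star_mul_self_eq_one (hm : 1 ≤ m) (hQ : IsGenPermMatrix m d Q) {i k : Fin d}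
    (h : Q i k ≠ 0) : star (Q i k) * Q i k = 1 := by
  have habs := abs_eq_one hm (hQ.2.2 i k h)
  have : star (Q i k) * Q i k = ((Complex.normSq (Q i k) : ℝ) : ℂ) := by
    rw [mul_comm]
    exact Complex.mul_conj (Q i k)
  rw [this]
  have : Complex.normSq (Q i k) = 1 := by
    rw [← Complex.sq_norm, habs]; norm_num
  rw [this]; norm_num

variable {j : ℕ} {σ τ : Fin j → Fin d}

lemma image_eq (hQ : IsGenPermMatrix m d Q) (hσ : Function.Injective σ)
    (hτ : Function.Injective τ) (hdet : (Q.submatrix σ τ).det ≠ 0) :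
    Finset.image (fun a => pi hQ (σ a)) Finset.univ = Finset.image τ Finset.univ := by
  apply Finset.eq_of_subset_of_card_le
  · intro k hk
    simp only [Finset.mem_image, Finset.mem_univ, true_and] at hk ⊢
    obtain ⟨a, rfl⟩ := hk
    by_contra hb
    push_neg at hb
    apply hdet
    apply Matrix.det_eq_zero_of_row_eq_zero a
    intro b
    simp only [Matrix.submatrix_apply]
    by_contra hz
    exact hb b (eq_pi hQ hz)
  · rw [Finset.card_image_of_injective _ hτ,
      Finset.card_image_of_injective _ (fun a b hab => hσ (pi_inj hQ hab))]

lemma unitary_sub (hm : 1 ≤ m) (hQ : IsGenPermMatrix m d Q)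
    (hσ : Function.Injective σ) (hτ : Function.Injective τ)
    (hdet : (Q.submatrix σ τ).det ≠ 0) :
    (Q.submatrix σ τ)ᴴ * (Q.submatrix σ τ) = 1 := by
  ext b c
  rw [Matrix.mul_apply]
  simp only [Matrix.conjTranspose_apply, Matrix.submatrix_apply, Matrix.one_apply]
  by_cases hbc : b = c
  · subst hbc
    rw [if_pos rfl]
    have : τ b ∈ Finset.image (fun a => pi hQ (σ a)) Finset.univ := by
      rw [image_eq hQ hσ hτ hdet]
      exact Finset.mem_image_of_mem τ (Finset.mem_univ b)
    obtain ⟨a, -, ha⟩ := Finset.mem_image.mp this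
    rw [Finset.sum_eq_single a]
    · rw [← ha]
      exact star_mul_self_eq_one hm hQ (pi_spec hQ (σ a))
    · intro a' _ haa'
      have : Q (σ a') (τ b) = 0 := by
        by_contra hz
        have := eq_pi hQ hz
        rw [← ha] at this
        exact haa' (hσ (pi_inj hQ this.symm))
      rw [this]; ring
    · intro habs; exact absurd (Finset.mem_univ a) habs
  · rw [if_neg hbc]
    apply Finset.sum_eq_zero
    intro a _
    by_cases h1 : Q (σ a) (τ b) = 0
    · rw [h1]; simp
    · have hb := eq_pi hQ h1
      have : Q (σ a) (τ c) = 0 := by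
        by_contra hz
        have hc := eq_pi hQ hz
        exact hbc (hτ (hb.trans hc.symm))
      rw [this]; ring

end GPMaux

/-- For a generalized permutation matrix `Q` and `j`-combinations `σ, τ, ν`
(strictly increasing tuples),
`det ((Q^†)_{τ,σ}) * det (Q_{σ,ν}) = |det (Q_{σ,τ})|` if `τ = ν`, and `= 0` otherwise. -/
theorem subdeterminant_conjTranspose_mul
    (m d j : ℕ) (hm : 1 ≤ m) (hd : 1 ≤ d) (hj : 1 ≤ j) (hjd : j ≤ d)
    (Q : Matrix (Fin d) (Fin d) ℂ) (hQ : IsGenPermMatrix m d Q)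
    (σ τ ν : Fin j → Fin d)
    (hσ : StrictMono σ) (hτ : StrictMono τ) (hν : StrictMono ν) :
    (Q.conjTranspose.submatrix τ σ).det * (Q.submatrix σ ν).det =
      if τ = ν then (‖(Q.submatrix σ τ).det‖ : ℂ) else 0 := by
  classical
  have hT : Q.conjTranspose.submatrix τ σ = (Q.submatrix σ τ)ᴴ := by
    ext a b
    simp [Matrix.conjTranspose_apply]
  rw [hT, Matrix.det_conjTranspose]
  by_cases hτν : τ = ν
  · subst hτν
    rw [if_pos rfl]
    by_cases hdet : (Q.submatrix σ τ).det = 0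
    · simp [hdet]
    · have hU := GPMaux.unitary_sub hm hQ hσ.injective hτ.injective hdet
      have h1 : star (Q.submatrix σ τ).det * (Q.submatrix σ τ).det = 1 := by
        rw [← Matrix.det_conjTranspose, ← Matrix.det_mul, hU, Matrix.det_one]
      rw [h1]
      have h2 : ((Complex.normSq (Q.submatrix σ τ).det : ℝ) : ℂ) = 1 := by
        rw [← Complex.mul_conj, mul_comm]
        exact h1
      have h3 : Complex.normSq (Q.submatrix σ τ).det = 1 := by
        exact_mod_cast h2
      have h4 : ‖(Q.submatrix σ τ).det‖ = 1 := by
        rw [Complex.norm_def, h3, Real.sqrt_one]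
      rw [h4]; norm_num
  · rw [if_neg hτν]
    by_cases h1 : (Q.submatrix σ τ).det = 0
    · rw [h1]; simp
    by_cases h2 : (Q.submatrix σ ν).det = 0
    · rw [h2]; ring
    exfalso
    apply hτν
    have hiτ := GPMaux.image_eq hQ hσ.injective hτ.injective h1
    have hiν := GPMaux.image_eq hQ hσ.injective hν.injective h2
    have himg : Finset.image τ Finset.univ = Finset.image ν Finset.univ := by
      rw [← hiτ, ← hiν]
    set s := Finset.image τ Finset.univ with hs
    have hcard : s.card = j := by
      rw [hs, Finset.card_image_of_injective _ hτ.injective, Finset.card_fin]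
    have hτ' : τ = s.orderEmbOfFin hcard := by
      apply Finset.orderEmbOfFin_unique hcard
      · intro x; exact Finset.mem_image_of_mem τ (Finset.mem_univ x)
      · exact hτ
    have hν' : ν = s.orderEmbOfFin hcard := by
      apply Finset.orderEmbOfFin_unique hcard
      · intro x; rw [himg]; exact Finset.mem_image_of_mem ν (Finset.mem_univ x)
      · exact hν
    rw [hτ', hν']
end

section
/- Let n ≥ 1 and 1 ≤ k ≤ n, and let G be a subgroup of Sym⁺(2,2n) (the group of 2n×2n signed permutation matrices with determinant 1) such that the only linear subspaces W of ℝ^{binom(2n,2k)} satisfying φ_{2k}(Q)·W ⊆ W for all Q ∈ G are W = {0} and W = ℝ^{binom(2n,2k)}. Then for every 2k-combination τ of {0,…,2n−1} and every set D of 2k-combinations of {0,…,2n−1} with |D| = binom(n,k), one has (1/|G|) · Σ_{Q∈G} Σ_{σ∈D} det(Q_{σ,τ})² = binom(n,k) / binom(2n,2k). -/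
open Classical

open Matrix

/-- A `d × d` real signed permutation matrix: entries in `{0, 1, -1}`, with exactly one
nonzero entry in each row and each column. -/
def IsSignedPerm {d : ℕ} (Q : Matrix (Fin d) (Fin d) ℝ) : Prop :=
  (∀ i j, Q i j = 0 ∨ Q i j = 1 ∨ Q i j = -1) ∧
  (∀ i, ∃! j, Q i j ≠ 0) ∧ (∀ j, ∃! i, Q i j ≠ 0)

/-- The `j`-th compound matrix of `Q`, with rows and columns indexed by `j`-combinations
(strictly increasing tuples), whose `(σ,τ)` entry is `det (Q_{σ,τ})`. -/
noncomputable def compound {d : ℕ} (j : ℕ) (Q : Matrix (Fin d) (Fin d) ℝ) :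
    Matrix {f : Fin j → Fin d // StrictMono f} {f : Fin j → Fin d // StrictMono f} ℝ :=
  Matrix.of fun σ τ => (Q.submatrix σ.1 τ.1).det

lemma strictMono_eq_of_image_eq {j d : ℕ} {f g : Fin j → Fin d} (hf : StrictMono f)
    (hg : StrictMono g)
    (h : Finset.image f Finset.univ = Finset.image g Finset.univ) : f = g := by
  have hc : (Finset.image f Finset.univ).card = j := by
    rw [Finset.card_image_of_injective _ hf.injective, Finset.card_univ, Fintype.card_fin]
  have h1 := Finset.orderEmbOfFin_unique hc
    (fun i => Finset.mem_image_of_mem _ (Finset.mem_univ i)) hf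
  have h2 := Finset.orderEmbOfFin_unique hc
    (fun i => h ▸ Finset.mem_image_of_mem _ (Finset.mem_univ i)) hg
  exact h1.trans h2.symm

lemma sum_injective_eq {j d : ℕ} (h : (Fin j → Fin d) → ℝ) :
    ∑ r ∈ Finset.univ.filter (fun r : Fin j → Fin d => Function.Injective r), h r =
    ∑ p : {f : Fin j → Fin d // StrictMono f} × Equiv.Perm (Fin j), h (p.1.1 ∘ p.2) := by
  symm
  apply Finset.sum_bij (i := fun (p : {f : Fin j → Fin d // StrictMono f} × Equiv.Perm (Fin j))
      (_ : p ∈ Finset.univ) => p.1.1 ∘ p.2)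
  · intro p _
    simp only [Finset.mem_filter, Finset.mem_univ, true_and]
    exact p.1.2.injective.comp p.2.injective
  · intro p _ q _ hpq
    have himg : Finset.image p.1.1 Finset.univ = Finset.image q.1.1 Finset.univ := by
      have h1 : Finset.image (p.1.1 ∘ p.2) Finset.univ = Finset.image p.1.1 Finset.univ := by
        rw [← Finset.image_image]
        congr 1
        exact Finset.image_univ_equiv p.2
      have h2 : Finset.image (q.1.1 ∘ q.2) Finset.univ = Finset.image q.1.1 Finset.univ := by
        rw [← Finset.image_image]
        congr 1
        exact Finset.image_univ_equiv q.2
      rw [← h1, ← h2, hpq]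
    have hμ : p.1 = q.1 := Subtype.ext (strictMono_eq_of_image_eq p.1.2 q.1.2 himg)
    have hπ : p.2 = q.2 := Equiv.ext fun i =>
      p.1.2.injective ((congrFun hpq i).trans (by rw [hμ]; rfl))
    exact Prod.ext hμ hπ
  · intro r hr
    rw [Finset.mem_filter] at hr
    have rinj : Function.Injective r := hr.2
    set s : Finset (Fin d) := Finset.image r Finset.univ with hs_def
    have hs : s.card = j := by
      rw [hs_def, Finset.card_image_of_injective _ rinj, Finset.card_univ, Fintype.card_fin]
    have hmem : ∀ i, r i ∈ s := fun i => Finset.mem_image_of_mem _ (Finset.mem_univ i)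
    set πf : Fin j → Fin j := fun i => (s.orderIsoOfFin hs).symm ⟨r i, hmem i⟩ with hπf
    have πinj : Function.Injective πf := by
      intro a b hab
      apply rinj
      have hab' : (s.orderIsoOfFin hs).symm ⟨r a, hmem a⟩ =
          (s.orderIsoOfFin hs).symm ⟨r b, hmem b⟩ := hab
      have := (s.orderIsoOfFin hs).symm.injective hab'
      exact congrArg Subtype.val this
    obtain ⟨π, hπ⟩ : ∃ π : Equiv.Perm (Fin j), ⇑π = πf :=
      ⟨Equiv.ofBijective πf (Finite.injective_iff_bijective.mp πinj), rfl⟩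
    refine ⟨⟨⟨s.orderEmbOfFin hs, (s.orderEmbOfFin hs).strictMono⟩, π⟩, Finset.mem_univ _, ?_⟩
    funext i
    show s.orderEmbOfFin hs (π i) = r i
    rw [hπ, hπf]
    rw [← Finset.coe_orderIsoOfFin_apply, OrderIso.apply_symm_apply]
  · intro p _
    rfl

lemma cauchyBinet {j d : ℕ} (A : Matrix (Fin j) (Fin d) ℝ) (B : Matrix (Fin d) (Fin j) ℝ) :
    (A * B).det = ∑ μ : {f : Fin j → Fin d // StrictMono f},
      (A.submatrix id μ.1).det * (B.submatrix μ.1 id).det := by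
  have h1 : (A * B).det = ∑ r : Fin j → Fin d, (∏ i, A i (r i)) * (B.submatrix r id).det := by
    have e1 : (A * B).det = Matrix.detRowAlternating (fun i => ∑ m, A i m • B m) := by
      congr 1
      funext i
      funext x
      simp [Matrix.mul_apply]
    rw [e1]
    rw [show (Matrix.detRowAlternating (fun i => ∑ m, A i m • B m) : ℝ) =
      Matrix.detRowAlternating.toMultilinearMap (fun i => ∑ m, A i m • B m) from rfl]
    rw [MultilinearMap.map_sum]
    refine Finset.sum_congr rfl fun r _ => ?_
    rw [MultilinearMap.map_smul_univ, smul_eq_mul]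
    rfl
  rw [h1, ← Finset.sum_filter_add_sum_filter_not Finset.univ
    (fun r : Fin j → Fin d => Function.Injective r)]
  have h0 : ∑ r ∈ Finset.univ.filter
      (fun r : Fin j → Fin d => ¬ Function.Injective r),
      (∏ i, A i (r i)) * (B.submatrix r id).det = 0 := by
    refine Finset.sum_eq_zero fun r hr => ?_
    rw [Finset.mem_filter] at hr
    rw [Function.not_injective_iff] at hr
    obtain ⟨a, b, hab, hne⟩ := hr.2
    have : (B.submatrix r id).det = 0 :=
      Matrix.det_zero_of_row_eq hne (by funext x; simp [hab])
    rw [this, mul_zero]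
  rw [h0, add_zero, sum_injective_eq]
  rw [Fintype.sum_prod_type]
  refine Finset.sum_congr rfl fun μ _ => ?_
  have key : ∀ π : Equiv.Perm (Fin j),
      (∏ i, A i ((μ.1 ∘ π) i)) * (B.submatrix (μ.1 ∘ π) id).det =
      (Equiv.Perm.sign π : ℝ) * (∏ i, A i (μ.1 (π i))) * (B.submatrix μ.1 id).det := by
    intro π
    have : B.submatrix (μ.1 ∘ π) id = (B.submatrix μ.1 id).submatrix π id := by
      rw [Matrix.submatrix_submatrix]
      rfl
    rw [this, Matrix.det_permute]
    simp only [Function.comp]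
    push_cast
    ring
  rw [Finset.sum_congr rfl (fun π _ => key π)]
  have : (A.submatrix id μ.1).det = ∑ π : Equiv.Perm (Fin j),
      (Equiv.Perm.sign π : ℝ) * ∏ i, A i (μ.1 (π i)) := by
    rw [← Matrix.det_transpose, Matrix.det_apply']
    refine Finset.sum_congr rfl fun π _ => ?_
    congr 1
  rw [this, Finset.sum_mul]

lemma compound_mul {d : ℕ} (j : ℕ) (Q R : Matrix (Fin d) (Fin d) ℝ) :
    compound j (Q * R) = compound j Q * compound j R := by
  ext σ τ
  show ((Q * R).submatrix σ.1 τ.1).det = _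
  have : (Q * R).submatrix σ.1 τ.1 = (Q.submatrix σ.1 id) * (R.submatrix id τ.1) := by
    ext a b
    simp [Matrix.mul_apply]
  rw [this, cauchyBinet]
  rw [Matrix.mul_apply]
  refine Finset.sum_congr rfl fun μ _ => ?_
  rw [Matrix.submatrix_submatrix, Matrix.submatrix_submatrix]
  simp [compound]

lemma compound_transpose {d : ℕ} (j : ℕ) (Q : Matrix (Fin d) (Fin d) ℝ) :
    compound j Qᵀ = (compound j Q)ᵀ := by
  ext σ τ
  show (Qᵀ.submatrix σ.1 τ.1).det = (Q.submatrix τ.1 σ.1).det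
  rw [← Matrix.transpose_submatrix, Matrix.det_transpose]

lemma compound_one {d : ℕ} (j : ℕ) :
    compound j (1 : Matrix (Fin d) (Fin d) ℝ) = 1 := by
  ext σ τ
  show ((1 : Matrix (Fin d) (Fin d) ℝ).submatrix σ.1 τ.1).det = (1 : Matrix _ _ ℝ) σ τ
  by_cases h : σ = τ
  · subst h
    have : (1 : Matrix (Fin d) (Fin d) ℝ).submatrix σ.1 σ.1 = 1 := by
      ext a b
      simp [Matrix.one_apply, σ.2.injective.eq_iff]
    rw [this, Matrix.det_one, Matrix.one_apply_eq]
  · have hne : Finset.image σ.1 Finset.univ ≠ Finset.image τ.1 Finset.univ := by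
      intro he
      exact h (Subtype.ext (strictMono_eq_of_image_eq σ.2 τ.2 he))
    have hcard : (Finset.image σ.1 Finset.univ).card = (Finset.image τ.1 Finset.univ).card := by
      rw [Finset.card_image_of_injective _ σ.2.injective,
        Finset.card_image_of_injective _ τ.2.injective]
    have : ∃ i, σ.1 i ∉ Finset.image τ.1 Finset.univ := by
      by_contra hc
      push_neg at hc
      have hsub : Finset.image σ.1 Finset.univ ⊆ Finset.image τ.1 Finset.univ := by
        intro x hx
        rw [Finset.mem_image] at hx
        obtain ⟨i, _, rfl⟩ := hx
        exact hc i
      exact hne (Finset.eq_of_subset_of_card_le hsub (le_of_eq hcard.symm))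
    obtain ⟨i, hi⟩ := this
    have hz : ((1 : Matrix (Fin d) (Fin d) ℝ).submatrix σ.1 τ.1).det = 0 := by
      apply Matrix.det_eq_zero_of_row_eq_zero i
      intro b
      have : σ.1 i ≠ τ.1 b := by
        intro he
        exact hi (he ▸ Finset.mem_image_of_mem _ (Finset.mem_univ b))
      simp [Matrix.one_apply, this]
    rw [hz, Matrix.one_apply_ne h]

lemma IsSignedPerm.transpose_mul_self {d : ℕ} {Q : Matrix (Fin d) (Fin d) ℝ}
    (h : IsSignedPerm Q) : Qᵀ * Q = 1 := by
  obtain ⟨hval, hrow, hcol⟩ := h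
  ext a b
  rw [Matrix.mul_apply, Matrix.one_apply]
  by_cases hab : a = b
  · subst hab
    obtain ⟨i0, hi0, hi0u⟩ := hcol a
    rw [if_pos rfl]
    rw [Finset.sum_eq_single i0]
    · rcases hval i0 a with h0 | h1 | h2
      · exact absurd h0 hi0
      · simp [h1]
      · simp [h2]
    · intro i _ hne
      have : Q i a = 0 := by
        by_contra hc
        exact hne (hi0u i hc)
      simp [this]
    · intro hni; exact absurd (Finset.mem_univ i0) hni
  · rw [if_neg hab]
    refine Finset.sum_eq_zero fun i _ => ?_
    by_cases hqa : Q i a = 0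
    · simp [hqa]
    · have hqb : Q i b = 0 := by
        by_contra hqb
        obtain ⟨jq, _, hju⟩ := hrow i
        exact hab ((hju a hqa).trans (hju b hqb).symm)
      simp [hqb]

lemma card_strictMono (j d : ℕ) :
    Fintype.card {f : Fin j → Fin d // StrictMono f} = d.choose j := by
  have e : {f : Fin j → Fin d // StrictMono f} ≃ {s : Finset (Fin d) // s.card = j} :=
    { toFun := fun f => ⟨Finset.image f.1 Finset.univ, by
        rw [Finset.card_image_of_injective _ f.2.injective, Finset.card_univ, Fintype.card_fin]⟩
      invFun := fun s => ⟨s.1.orderEmbOfFin s.2, (Finset.orderEmbOfFin s.1 s.2).strictMono⟩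
      left_inv := fun f => Subtype.ext <| by
        exact (Finset.orderEmbOfFin_unique _
          (fun i => Finset.mem_image_of_mem _ (Finset.mem_univ i)) f.2).symm
      right_inv := fun s => Subtype.ext <| by
        ext x
        simp only [Finset.mem_image, Finset.mem_univ, true_and]
        constructor
        · rintro ⟨i, rfl⟩; exact Finset.orderEmbOfFin_mem s.1 s.2 i
        · intro hx
          have h1 := Finset.range_orderEmbOfFin s.1 s.2
          have h2 : x ∈ Set.range (s.1.orderEmbOfFin s.2) := by rw [h1]; exact hx
          obtain ⟨i, hi⟩ := h2
          exact ⟨i, hi⟩ }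
  rw [Fintype.card_congr e, Fintype.card_finset_len, Fintype.card_fin]

/-- If `G` is a (finite, nonempty, multiplication-closed, i.e. sub-) group of `2n × 2n`
signed permutation matrices of determinant `1` such that the compound representation
`φ_{2k}` of `G` on `ℝ^{C(2n,2k)}` admits no nontrivial invariant subspace, then for every
`2k`-combination `τ` and every set `D` of `2k`-combinations with `|D| = C(n,k)`,
`(1/|G|) ∑_{Q ∈ G} ∑_{σ ∈ D} det (Q_{σ,τ})² = C(n,k) / C(2n,2k)`. -/
theorem tight_frame_eigenvalue
    (n k : ℕ) (hn : 1 ≤ n) (hk : 1 ≤ k) (hkn : k ≤ n)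
    (G : Finset (Matrix (Fin (2*n)) (Fin (2*n)) ℝ))
    (hG0 : G.Nonempty)
    (hG1 : ∀ Q ∈ G, IsSignedPerm Q ∧ Q.det = 1)
    (hG2 : ∀ Q ∈ G, ∀ R ∈ G, Q * R ∈ G)
    (hirr : ∀ W : Submodule ℝ ({f : Fin (2*k) → Fin (2*n) // StrictMono f} → ℝ),
      (∀ Q ∈ G, ∀ w ∈ W, (compound (2*k) Q).mulVec w ∈ W) → W = ⊥ ∨ W = ⊤)
    (τ : Fin (2*k) → Fin (2*n)) (hτ : StrictMono τ)
    (D : Finset {f : Fin (2*k) → Fin (2*n) // StrictMono f})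
    (hD : D.card = n.choose k) :
    (1 / (G.card : ℝ)) * ∑ Q ∈ G, ∑ σ ∈ D, ((Q.submatrix σ.1 τ).det) ^ 2 =
      (n.choose k : ℝ) / ((2*n).choose (2*k) : ℝ) := by
  classical
  set τ' : {f : Fin (2*k) → Fin (2*n) // StrictMono f} := ⟨τ, hτ⟩ with hτ'
  set φ := fun Q : Matrix (Fin (2*n)) (Fin (2*n)) ℝ => compound (2*k) Q with hφ
  have horth : ∀ Q ∈ G, (φ Q)ᵀ * φ Q = 1 := by
    intro Q hQ
    rw [hφ]
    simp only
    rw [← compound_transpose, ← compound_mul, (hG1 Q hQ).1.transpose_mul_self, compound_one]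
  set E := Matrix.single τ' τ' (1 : ℝ) with hE
  set Bm := ∑ Q ∈ G, φ Q * E * (φ Q)ᵀ with hBm
  have hentry : ∀ (M N : Matrix {f : Fin (2*k) → Fin (2*n) // StrictMono f}
      {f : Fin (2*k) → Fin (2*n) // StrictMono f} ℝ) (a b),
      (M * E * N) a b = M a τ' * N τ' b := by
    intro M N a b
    rw [Matrix.mul_apply]
    rw [Finset.sum_eq_single τ']
    · simp [hE]
    · intro y _ hy
      simp [hE, hy]
    · intro hni; exact absurd (Finset.mem_univ τ') hni
  have hBapp : ∀ a b, Bm a b = ∑ Q ∈ G, φ Q a τ' * φ Q b τ' := by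
    intro a b
    rw [hBm, Matrix.sum_apply]
    refine Finset.sum_congr rfl fun Q _ => ?_
    rw [hentry]
    rw [Matrix.transpose_apply]
  have hinjG : ∀ R ∈ G, Function.Injective
      (fun Q : Matrix (Fin (2*n)) (Fin (2*n)) ℝ => R * Q) := by
    intro R hR
    have hu : IsUnit R := (Matrix.isUnit_iff_isUnit_det R).mpr
      (by rw [(hG1 R hR).2]; exact isUnit_one)
    intro X Y hXY
    exact hu.mul_left_cancel hXY
  have himg : ∀ R ∈ G, G.image (fun Q => R * Q) = G := by
    intro R hR
    apply Finset.eq_of_subset_of_card_le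
    · intro x hx
      rw [Finset.mem_image] at hx
      obtain ⟨Q, hQ, rfl⟩ := hx
      exact hG2 R hR Q hQ
    · rw [Finset.card_image_of_injective _ (hinjG R hR)]
  have hcomm : ∀ R ∈ G, φ R * Bm = Bm * φ R := by
    intro R hR
    have h1 : φ R * Bm * (φ R)ᵀ = Bm := by
      rw [hBm, Finset.mul_sum, Finset.sum_mul]
      have hterm : ∀ Q ∈ G, φ R * (φ Q * E * (φ Q)ᵀ) * (φ R)ᵀ
          = φ (R * Q) * E * (φ (R * Q))ᵀ := by
        intro Q hQ
        rw [hφ]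
        simp only
        rw [compound_mul, Matrix.transpose_mul]
        noncomm_ring
      rw [Finset.sum_congr rfl hterm]
      have hsi := Finset.sum_image (s := G) (g := fun Q => R * Q)
        (f := fun Q => φ Q * E * (φ Q)ᵀ) (fun x _ y _ hxy => hinjG R hR hxy)
      rw [himg R hR] at hsi
      exact hsi.symm
    calc φ R * Bm = φ R * Bm * ((φ R)ᵀ * φ R) := by rw [horth R hR, mul_one]
      _ = (φ R * Bm * (φ R)ᵀ) * φ R := by noncomm_ring
      _ = Bm * φ R := by rw [h1]
  have hsymm : ∀ a b, Bm a b = Bm b a := by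
    intro a b
    rw [hBapp, hBapp]
    exact Finset.sum_congr rfl fun Q _ => mul_comm _ _
  have hherm : Bm.IsHermitian := by
    show Bmᴴ = Bm
    ext a b
    rw [Matrix.conjTranspose_apply, star_trivial]
    exact hsymm b a
  set c : ℝ := hherm.eigenvalues τ' with hc
  have hv : Bm *ᵥ ⇑(hherm.eigenvectorBasis τ') = c • ⇑(hherm.eigenvectorBasis τ') :=
    hherm.mulVec_eigenvectorBasis τ'
  have hv0 : ⇑(hherm.eigenvectorBasis τ') ≠ 0 := by
    intro h0
    apply hherm.eigenvectorBasis.orthonormal.ne_zero τ'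
    ext i
    exact congrFun h0 i
  set W : Submodule ℝ ({f : Fin (2*k) → Fin (2*n) // StrictMono f} → ℝ) :=
    { carrier := {w | Bm *ᵥ w = c • w}
      add_mem' := by
        intro x y hx hy
        simp only [Set.mem_setOf_eq] at *
        rw [Matrix.mulVec_add, hx, hy, smul_add]
      zero_mem' := by
        simp only [Set.mem_setOf_eq, Matrix.mulVec_zero, smul_zero]
      smul_mem' := by
        intro r w hw
        simp only [Set.mem_setOf_eq] at *
        rw [Matrix.mulVec_smul, hw, smul_comm] } with hW
  have hWmem : ∀ w : {f : Fin (2*k) → Fin (2*n) // StrictMono f} → ℝ,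
      w ∈ W ↔ Bm *ᵥ w = c • w := fun w => Iff.rfl
  have hinv : ∀ Q ∈ G, ∀ w ∈ W, (compound (2*k) Q).mulVec w ∈ W := by
    intro Q hQ w hw
    rw [hWmem] at hw ⊢
    show Bm *ᵥ (φ Q *ᵥ w) = c • (φ Q *ᵥ w)
    rw [Matrix.mulVec_mulVec, ← hcomm Q hQ, ← Matrix.mulVec_mulVec, hw,
      Matrix.mulVec_smul]
  have hWtop : W = ⊤ := by
    rcases hirr W hinv with h | h
    · exfalso
      have hmem : ⇑(hherm.eigenvectorBasis τ') ∈ W := hv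
      rw [h, Submodule.mem_bot] at hmem
      exact hv0 hmem
    · exact h
  have hdiag : ∀ a, Bm a a = c := by
    intro a
    have hmem : (Pi.single a 1 : _ → ℝ) ∈ W := by rw [hWtop]; exact Submodule.mem_top
    have h2 := congrFun ((hWmem _).mp hmem) a
    simp only [Matrix.mulVec, dotProduct, Pi.single_apply, Pi.smul_apply,
      smul_eq_mul] at h2
    simpa using h2
  have hGcard : (0 : ℝ) < G.card := by
    exact_mod_cast Finset.card_pos.mpr hG0
  have hNpos : 0 < (2*n).choose (2*k) := Nat.choose_pos (by omega)
  have hcardι : (Fintype.card {f : Fin (2*k) → Fin (2*n) // StrictMono f} : ℝ)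
      = ((2*n).choose (2*k) : ℝ) := by
    exact_mod_cast congrArg (Nat.cast (R := ℝ)) (card_strictMono (2*k) (2*n))
  have hsum1 : ∀ Q ∈ G, ∑ a : {f : Fin (2*k) → Fin (2*n) // StrictMono f},
      φ Q a τ' * φ Q a τ' = 1 := by
    intro Q hQ
    have h := congrFun (congrFun (horth Q hQ) τ') τ'
    rw [Matrix.mul_apply, Matrix.one_apply_eq] at h
    simpa [Matrix.transpose_apply] using h
  have htr : (Fintype.card {f : Fin (2*k) → Fin (2*n) // StrictMono f} : ℝ) * c
      = G.card := by
    have h1 : ∑ a : {f : Fin (2*k) → Fin (2*n) // StrictMono f}, Bm a a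
        = (Fintype.card {f : Fin (2*k) → Fin (2*n) // StrictMono f} : ℝ) * c := by
      rw [Finset.sum_congr rfl (fun a _ => hdiag a), Finset.sum_const, Finset.card_univ,
        nsmul_eq_mul]
    have h2 : ∑ a : {f : Fin (2*k) → Fin (2*n) // StrictMono f}, Bm a a = (G.card : ℝ) := by
      calc ∑ a : {f : Fin (2*k) → Fin (2*n) // StrictMono f}, Bm a a
          = ∑ a : {f : Fin (2*k) → Fin (2*n) // StrictMono f}, ∑ Q ∈ G,
            φ Q a τ' * φ Q a τ' := Finset.sum_congr rfl fun a _ => hBapp a a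
        _ = ∑ Q ∈ G, ∑ a : {f : Fin (2*k) → Fin (2*n) // StrictMono f},
            φ Q a τ' * φ Q a τ' := Finset.sum_comm
        _ = ∑ Q ∈ G, (1 : ℝ) := Finset.sum_congr rfl hsum1
        _ = G.card := by rw [Finset.sum_const, nsmul_eq_mul, mul_one]
    rw [← h1, h2]
  have hmain : ∑ Q ∈ G, ∑ σ ∈ D, ((Q.submatrix σ.1 τ).det) ^ 2 = (D.card : ℝ) * c := by
    calc ∑ Q ∈ G, ∑ σ ∈ D, ((Q.submatrix σ.1 τ).det) ^ 2
        = ∑ σ ∈ D, ∑ Q ∈ G, φ Q σ τ' * φ Q σ τ' := by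
          rw [Finset.sum_comm]
          exact Finset.sum_congr rfl fun σ _ => Finset.sum_congr rfl fun Q _ => sq _
      _ = ∑ σ ∈ D, Bm σ σ := Finset.sum_congr rfl fun σ _ => (hBapp σ σ).symm
      _ = ∑ σ ∈ D, c := Finset.sum_congr rfl fun σ _ => hdiag σ
      _ = (D.card : ℝ) * c := by rw [Finset.sum_const, nsmul_eq_mul]
  rw [hmain, hD]
  have hNne : ((2*n).choose (2*k) : ℝ) ≠ 0 := by exact_mod_cast hNpos.ne'
  have hc_eq : c = (G.card : ℝ) / ((2*n).choose (2*k) : ℝ) := by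
    rw [eq_div_iff hNne, ← htr, hcardι]
    ring
  have hGne : (G.card : ℝ) ≠ 0 := hGcard.ne'
  rw [hc_eq]
  field_simp
end

section
/- Let n ≥ 1 and let 1 ≤ k ≤ 2n with k ≠ n. Then the only linear subspaces W of ℝ^{binom(2n,k)} satisfying φ_k(Q)·W ⊆ W for all Q ∈ Sym⁺(2,2n) are W = {0} and W = ℝ^{binom(2n,k)}; that is, the compound-matrix representation φ_k of the group of 2n×2n signed permutation matrices with determinant 1 is irreducible. -/
open Classical

namespace CompoundIrredAux

variable {d k : ℕ}

/-- The type of `k`-combinations of `{0,…,d-1}`. -/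
abbrev Combo (d k : ℕ) := {f : Fin k → Fin d // StrictMono f}

/-- The image finset of a combination. -/
noncomputable def img (σ : Combo d k) : Finset (Fin d) := Finset.image σ.1 Finset.univ

lemma mem_img {σ : Combo d k} {x : Fin d} : x ∈ img σ ↔ ∃ i, σ.1 i = x := by
  simp [img]

lemma card_img (σ : Combo d k) : (img σ).card = k := by
  rw [img, Finset.card_image_of_injective _ σ.2.injective, Finset.card_univ, Fintype.card_fin]

lemma combo_ext {σ τ : Combo d k} (h : img σ = img τ) : σ = τ := by
  apply Subtype.ext
  have h1 := Finset.orderEmbOfFin_unique (card_img τ) (f := σ.1)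
    (fun x => h ▸ mem_img.2 ⟨x, rfl⟩) σ.2
  have h2 := Finset.orderEmbOfFin_unique (card_img τ) (f := τ.1)
    (fun x => mem_img.2 ⟨x, rfl⟩) τ.2
  rw [h1, h2]

/-- Generalized permutation matrix. -/
noncomputable def genPerm {m : Type*} [DecidableEq m] (e : Equiv.Perm m) (c : m → ℝ) :
    Matrix m m ℝ :=
  Matrix.of fun i j => if i = e j then c j else 0

lemma genPerm_eq_mul {m : Type*} [DecidableEq m] [Fintype m] (e : Equiv.Perm m) (c : m → ℝ) :
    genPerm e c = (e⁻¹ : Equiv.Perm m).permMatrix ℝ * Matrix.diagonal c := by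
  ext i j
  rw [Matrix.mul_diagonal]
  simp only [genPerm, Matrix.of_apply, Equiv.Perm.permMatrix, PEquiv.toMatrix_apply,
    Equiv.toPEquiv_apply, Option.mem_def, Option.some.injEq]
  by_cases h : i = e j
  · have : j = e⁻¹ i := by rw [h]; simp
    simp [h, this.symm]
  · have : ¬ (j = e⁻¹ i) := fun hc => h (by rw [hc]; simp)
    rw [if_neg h, if_neg (fun hc => this hc.symm), zero_mul]

lemma det_genPerm {m : Type*} [DecidableEq m] [Fintype m] (e : Equiv.Perm m) (c : m → ℝ) :
    (genPerm e c).det = ((Equiv.Perm.sign e : ℤ) : ℝ) * ∏ j, c j := by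
  rw [genPerm_eq_mul, Matrix.det_mul, Matrix.det_permutation, Matrix.det_diagonal]
  norm_num

lemma isSignedPerm_genPerm {e : Equiv.Perm (Fin d)} {c : Fin d → ℝ}
    (hc : ∀ i, c i = 1 ∨ c i = -1) : IsSignedPerm (genPerm e c) := by
  have hc0 : ∀ i, c i ≠ 0 := by
    intro i; rcases hc i with h | h <;> rw [h] <;> norm_num
  refine ⟨fun i j => ?_, fun i => ⟨e⁻¹ i, ?_, ?_⟩, fun j => ⟨e j, ?_, ?_⟩⟩
  · by_cases h : i = e j
    · rcases hc j with h' | h' <;> simp [genPerm, h, h']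
    · left; simp [genPerm, h]
  · simp [genPerm, hc0]
  · intro j hj
    simp only [genPerm, Matrix.of_apply, ne_eq, ite_eq_right_iff, not_forall] at hj
    rw [hj.1]; simp
  · simp [genPerm, hc0]
  · intro i hi
    simp only [genPerm, Matrix.of_apply, ne_eq, ite_eq_right_iff, not_forall] at hi
    exact hi.1

lemma exists_mem_not_mem {S R : Finset (Fin d)} (hcard : S.card = R.card) (hne : S ≠ R) :
    ∃ x ∈ S, x ∉ R := by
  by_contra hall
  push_neg at hall
  exact hne (Finset.eq_of_subset_of_card_le hall (le_of_eq hcard.symm))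

lemma compound_genPerm_apply_eq_zero (e : Equiv.Perm (Fin d)) (c : Fin d → ℝ)
    {σ ρ τ : Combo d k} (hτ : img τ = Finset.image (fun i => e (σ.1 i)) Finset.univ)
    (hρ : ρ ≠ τ) : compound k (genPerm e c) ρ σ = 0 := by
  have hcard : (img τ).card = (img ρ).card := by rw [card_img, card_img]
  have hne : img τ ≠ img ρ := fun h => hρ (combo_ext h.symm)
  obtain ⟨x, hxT, hxR⟩ := exists_mem_not_mem hcard hne
  rw [hτ, Finset.mem_image] at hxT
  obtain ⟨j, -, hj⟩ := hxT
  apply Matrix.det_eq_zero_of_column_eq_zero j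
  intro i
  simp only [Matrix.submatrix_apply, genPerm, Matrix.of_apply]
  rw [if_neg]
  intro hcontra
  exact hxR (mem_img.2 ⟨i, by rw [hcontra, hj]⟩)

lemma compound_genPerm_apply_ne_zero (e : Equiv.Perm (Fin d)) {c : Fin d → ℝ}
    (hc : ∀ i, c i = 1 ∨ c i = -1)
    {σ τ : Combo d k} (hτ : img τ = Finset.image (fun i => e (σ.1 i)) Finset.univ) :
    compound k (genPerm e c) τ σ ≠ 0 := by
  -- build the permutation μ of Fin k
  have hex : ∀ j : Fin k, ∃ i : Fin k, τ.1 i = e (σ.1 j) := by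
    intro j
    have : e (σ.1 j) ∈ img τ := by
      rw [hτ]; exact Finset.mem_image.2 ⟨j, Finset.mem_univ _, rfl⟩
    exact mem_img.1 this
  choose μ hμ using hex
  have hμinj : Function.Injective μ := by
    intro a b hab
    have : e (σ.1 a) = e (σ.1 b) := by rw [← hμ a, ← hμ b, hab]
    exact σ.2.injective (e.injective this)
  have hμbij : Function.Bijective μ := (Finite.injective_iff_bijective).1 hμinj
  set eμ : Equiv.Perm (Fin k) := Equiv.ofBijective μ hμbij with heμ
  have hsub : (genPerm e c).submatrix τ.1 σ.1 = genPerm eμ (fun j => c (σ.1 j)) := by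
    ext i j
    simp only [Matrix.submatrix_apply, genPerm, Matrix.of_apply]
    have heq : eμ j = μ j := rfl
    by_cases hij : i = μ j
    · rw [if_pos (by rw [hij, hμ j]), if_pos (by rw [heq]; exact hij)]
    · rw [if_neg (fun h => hij (τ.2.injective (h.trans (hμ j).symm))),
        if_neg (by rw [heq]; exact hij)]
  show ((genPerm e c).submatrix τ.1 σ.1).det ≠ 0
  rw [hsub, det_genPerm]
  apply mul_ne_zero
  · rcases Int.units_eq_one_or (Equiv.Perm.sign eμ) with h | h <;> rw [h] <;> norm_num
  · apply Finset.prod_ne_zero_iff.2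
    intro j _
    rcases hc (σ.1 j) with h | h <;> rw [h] <;> norm_num

lemma mulVec_single_eq {I : Type*} [Fintype I] [DecidableEq I] (M : Matrix I I ℝ) (σ : I) :
    M.mulVec (Pi.single σ 1) = fun ρ => M ρ σ := by
  funext ρ
  simp [Matrix.mulVec, dotProduct, Pi.single_apply, mul_ite]

lemma diagonal_eq_genPerm (c : Fin d → ℝ) : Matrix.diagonal c = genPerm 1 c := by
  ext i j
  by_cases h : i = j
  · subst h; simp [genPerm, Matrix.diagonal_apply_eq]
  · rw [Matrix.diagonal_apply_ne _ h]
    simp [genPerm, h]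

lemma compound_diagonal (c : Fin d → ℝ) :
    compound k (Matrix.diagonal c)
      = Matrix.diagonal (fun σ : Combo d k => ∏ i, c (σ.1 i)) := by
  ext ρ σ
  by_cases h : ρ = σ
  · subst h
    rw [Matrix.diagonal_apply_eq]
    show ((Matrix.diagonal c).submatrix ρ.1 ρ.1).det = _
    have : (Matrix.diagonal c).submatrix ρ.1 ρ.1 = Matrix.diagonal (fun i => c (ρ.1 i)) := by
      ext i j
      by_cases hij : i = j
      · subst hij; simp
      · rw [Matrix.diagonal_apply_ne _ hij, Matrix.submatrix_apply,
          Matrix.diagonal_apply_ne _ (fun hc => hij (ρ.2.injective hc))]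
    rw [this, Matrix.det_diagonal]
  · rw [Matrix.diagonal_apply_ne _ h, diagonal_eq_genPerm]
    apply compound_genPerm_apply_eq_zero (τ := σ) (σ := σ)
    · simp [img]
    · exact h

lemma exists_sep {n k : ℕ} (hkn : k ≠ n) {S T : Finset (Fin (2*n))}
    (hS : S.card = k) (hT : T.card = k) (hST : S ≠ T) :
    ∃ ε : Fin (2*n) → ℝ, (∀ i, ε i = 1 ∨ ε i = -1) ∧ (∏ i, ε i) = 1 ∧
      (∏ x ∈ S, ε x) ≠ ∏ x ∈ T, ε x := by
  obtain ⟨a, ha⟩ : ∃ a, ¬ (a ∈ S ↔ a ∈ T) := by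
    by_contra hc
    push_neg at hc
    exact hST (Finset.ext hc)
  obtain ⟨b, hab, hb⟩ : ∃ b, b ≠ a ∧ (b ∈ S ↔ b ∈ T) := by
    by_contra hc
    push_neg at hc
    have hall : ∀ x, x ∈ S ↔ x ∉ T := by
      intro x
      by_cases hx : x = a
      · subst hx; tauto
      · have := hc x hx; tauto
    have hcompl : S = Tᶜ := Finset.ext fun x => by rw [Finset.mem_compl]; exact hall x
    have hcard : S.card = Fintype.card (Fin (2*n)) - T.card := by
      rw [hcompl, Finset.card_compl]
    have hTle : T.card ≤ Fintype.card (Fin (2*n)) := Finset.card_le_univ T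
    rw [Fintype.card_fin] at hcard hTle
    omega
  refine ⟨fun i => (if i = a then (-1:ℝ) else 1) * (if i = b then (-1:ℝ) else 1), ?_, ?_, ?_⟩
  · intro i
    show (if i = a then (-1:ℝ) else 1) * (if i = b then (-1:ℝ) else 1) = 1 ∨
      (if i = a then (-1:ℝ) else 1) * (if i = b then (-1:ℝ) else 1) = -1
    by_cases h1 : i = a <;> by_cases h2 : i = b
    · left; rw [if_pos h1, if_pos h2]; norm_num
    · right; rw [if_pos h1, if_neg h2]; norm_num
    · right; rw [if_neg h1, if_pos h2]; norm_num
    · left; rw [if_neg h1, if_neg h2]; norm_num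
  · rw [Finset.prod_mul_distrib, Finset.prod_ite_eq', Finset.prod_ite_eq']
    simp
  · rw [Finset.prod_mul_distrib, Finset.prod_mul_distrib, Finset.prod_ite_eq',
      Finset.prod_ite_eq', Finset.prod_ite_eq', Finset.prod_ite_eq']
    have hBeq : (if b ∈ T then (-1:ℝ) else 1) = (if b ∈ S then (-1:ℝ) else 1) := by
      rw [if_congr hb.symm rfl rfl]
    rw [hBeq]
    have hBne : (if b ∈ S then (-1:ℝ) else 1) ≠ 0 := by split <;> norm_num
    intro hcontra
    have heq := mul_right_cancel₀ hBne hcontra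
    by_cases haS : a ∈ S
    · have haT : a ∉ T := fun h => ha ⟨fun _ => h, fun _ => haS⟩
      rw [if_pos haS, if_neg haT] at heq; norm_num at heq
    · have haT : a ∈ T := by
        by_contra h
        exact ha ⟨fun h' => (haS h').elim, fun h' => (h h').elim⟩
      rw [if_neg haS, if_pos haT] at heq; norm_num at heq

end CompoundIrredAux

open CompoundIrredAux in
/-- For `1 ≤ k ≤ 2n` with `k ≠ n`, the compound-matrix representation `φ_k` of the group
`Sym⁺(2,2n)` of `2n × 2n` signed permutation matrices with determinant `1` is irreducible:
the only subspaces `W ⊆ ℝ^{C(2n,k)}` invariant under `φ_k(Q)` for every such `Q` are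
`{0}` and the whole space. -/
theorem compound_rep_irreducible
    (n k : ℕ) (hn : 1 ≤ n) (hk : 1 ≤ k) (hk2n : k ≤ 2*n) (hkn : k ≠ n)
    (W : Submodule ℝ ({f : Fin k → Fin (2*n) // StrictMono f} → ℝ))
    (hW : ∀ Q : Matrix (Fin (2*n)) (Fin (2*n)) ℝ, IsSignedPerm Q → Q.det = 1 →
      ∀ w ∈ W, (compound k Q).mulVec w ∈ W) :
    W = ⊥ ∨ W = ⊤ := by
  by_cases hbot : W = ⊥
  · exact Or.inl hbot
  right
  obtain ⟨w, hwW, hwne⟩ := (Submodule.ne_bot_iff W).1 hbot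
  obtain ⟨σ₀, hσ₀⟩ : ∃ σ, w σ ≠ 0 := by
    by_contra hc
    push_neg at hc
    exact hwne (funext hc)
  -- The diagonal operators preserve W
  have hχmem : ∀ (ε : Fin (2*n) → ℝ), (∀ i, ε i = 1 ∨ ε i = -1) → (∏ i, ε i) = 1 →
      ∀ v ∈ W, (fun ρ : Combo (2*n) k => (∏ i, ε (ρ.1 i)) * v ρ) ∈ W := by
    intro ε hε hprod v hv
    have h1 : IsSignedPerm (Matrix.diagonal ε) := by
      rw [diagonal_eq_genPerm]; exact isSignedPerm_genPerm hε
    have h2 : (Matrix.diagonal ε).det = 1 := by rw [Matrix.det_diagonal]; exact hprod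
    have hmem := hW _ h1 h2 v hv
    have heq : (compound k (Matrix.diagonal ε)).mulVec v
        = fun ρ : Combo (2*n) k => (∏ i, ε (ρ.1 i)) * v ρ := by
      funext ρ
      rw [compound_diagonal, Matrix.mulVec_diagonal]
    rwa [heq] at hmem
  -- Step 1: isolate the coordinate σ₀
  have key : ∀ s : Finset (Combo (2*n) k),
      ∃ v, v ∈ W ∧ v σ₀ ≠ 0 ∧ ∀ τ ∈ s, τ ≠ σ₀ → v τ = 0 := by
    intro s
    induction s using Finset.induction_on with
    | empty => exact ⟨w, hwW, hσ₀, by simp⟩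
    | @insert τ₀ s hns ih =>
      obtain ⟨v, hvW, hvσ, hvz⟩ := ih
      by_cases hts : τ₀ = σ₀
      · refine ⟨v, hvW, hvσ, fun τ hτ hτσ => ?_⟩
        rcases Finset.mem_insert.1 hτ with h | h
        · exact absurd (h.trans hts) hτσ
        · exact hvz τ h hτσ
      · have hST : img σ₀ ≠ img τ₀ := fun h => hts (combo_ext h.symm)
        obtain ⟨ε, hε, hprod, hne⟩ := exists_sep hkn (card_img σ₀) (card_img τ₀) hST
        have hχ : ∀ ρ : Combo (2*n) k, (∏ x ∈ img ρ, ε x) = ∏ i, ε (ρ.1 i) :=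
          fun ρ => Finset.prod_image (fun x _ y _ h => ρ.2.injective h)
        have hneχ : (∏ i, ε (σ₀.1 i)) ≠ ∏ i, ε (τ₀.1 i) := by
          rw [← hχ, ← hχ]; exact hne
        have hv1 := hχmem ε hε hprod v hvW
        have hv2 : (fun ρ : Combo (2*n) k => (∏ i, ε (ρ.1 i)) * v ρ)
            - (∏ i, ε (τ₀.1 i)) • v ∈ W :=
          W.sub_mem hv1 (W.smul_mem _ hvW)
        refine ⟨_, hv2, ?_, ?_⟩
        · show (∏ i, ε (σ₀.1 i)) * v σ₀ - (∏ i, ε (τ₀.1 i)) * v σ₀ ≠ 0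
          rw [← sub_mul]
          exact mul_ne_zero (sub_ne_zero.2 hneχ) hvσ
        · intro τ hτ hτσ
          show (∏ i, ε (τ.1 i)) * v τ - (∏ i, ε (τ₀.1 i)) * v τ = 0
          rcases Finset.mem_insert.1 hτ with h | h
          · subst h; rw [sub_self]
          · rw [hvz τ h hτσ, mul_zero, mul_zero, sub_zero]
  obtain ⟨v, hvW, hvσ, hvz⟩ := key Finset.univ
  have hsingle : Pi.single σ₀ (1:ℝ) ∈ W := by
    have hveq : Pi.single σ₀ (1:ℝ) = (v σ₀)⁻¹ • v := by
      funext ρ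
      by_cases h : ρ = σ₀
      · subst h
        simp [Pi.single_apply, inv_mul_cancel₀ hvσ]
      · simp [Pi.single_apply, h, hvz ρ (Finset.mem_univ _) h]
    rw [hveq]
    exact W.smul_mem _ hvW
  -- Step 2: all basis vectors are in W
  have hall : ∀ τ : Combo (2*n) k, Pi.single τ (1:ℝ) ∈ W := by
    intro τ
    have hcS : (img σ₀).card = (img τ).card := by rw [card_img, card_img]
    have hcSc : ((img σ₀)ᶜ).card = ((img τ)ᶜ).card := by
      rw [Finset.card_compl, Finset.card_compl, hcS]
    set e1 := Finset.equivOfCardEq hcS with he1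
    set e2 : {x : Fin (2*n) // ¬ x ∈ img σ₀} ≃ {x : Fin (2*n) // ¬ x ∈ img τ} :=
      ((Equiv.subtypeEquivRight (fun x => (Finset.mem_compl (a := x)).symm)).trans
        (Finset.equivOfCardEq hcSc)).trans
        (Equiv.subtypeEquivRight (fun x => (Finset.mem_compl (a := x)))) with he2
    set π : Equiv.Perm (Fin (2*n)) :=
      ((Equiv.sumCompl (fun x => x ∈ img σ₀)).symm.trans
        ((e1.sumCongr e2).trans (Equiv.sumCompl (fun x => x ∈ img τ)))) with hπ
    have hπS : ∀ x, x ∈ img σ₀ → π x ∈ img τ := by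
      intro x hx
      show (Equiv.sumCompl _) ((e1.sumCongr e2) ((Equiv.sumCompl _).symm x)) ∈ _
      rw [Equiv.sumCompl_symm_apply_of_pos hx, Equiv.sumCongr_apply, Sum.map_inl,
        Equiv.sumCompl_apply_inl]
      exact (e1 ⟨x, hx⟩).2
    have himg : img τ = Finset.image (fun i => π (σ₀.1 i)) Finset.univ := by
      refine (Finset.eq_of_subset_of_card_le (fun y hy => ?_) ?_).symm
      · obtain ⟨i, -, rfl⟩ := Finset.mem_image.1 hy
        exact hπS _ (mem_img.2 ⟨i, rfl⟩)
      · rw [card_img, Finset.card_image_of_injective _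
          (fun a b hab => σ₀.2.injective (π.injective hab)), Finset.card_univ, Fintype.card_fin]
    have hd0 : 0 < 2*n := by omega
    set i0 : Fin (2*n) := ⟨0, hd0⟩ with hi0
    set sg : ℝ := ((Equiv.Perm.sign π : ℤ) : ℝ) with hsgdef
    have hsg : sg = 1 ∨ sg = -1 := by
      rcases Int.units_eq_one_or (Equiv.Perm.sign π) with h | h
      · left; rw [hsgdef, h]; norm_num
      · right; rw [hsgdef, h]; norm_num
    set c : Fin (2*n) → ℝ := fun i => if i = i0 then sg else 1 with hcdef
    have hc : ∀ i, c i = 1 ∨ c i = -1 := by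
      intro i
      by_cases h : i = i0
      · rw [hcdef]; simp only [h, if_pos rfl]; exact hsg
      · left; rw [hcdef]; simp [h]
    have hprodc : (∏ j, c j) = sg := by
      rw [hcdef]
      rw [Finset.prod_ite_eq' Finset.univ i0 (fun _ => sg)]
      simp
    have hdet : (genPerm π c).det = 1 := by
      rw [det_genPerm, hprodc, ← hsgdef]
      rcases hsg with h | h <;> rw [h] <;> norm_num
    have hmem := hW _ (isSignedPerm_genPerm hc) hdet _ hsingle
    rw [mulVec_single_eq] at hmem
    have hr : compound k (genPerm π c) τ σ₀ ≠ 0 :=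
      compound_genPerm_apply_ne_zero π hc himg
    have hvec : (fun ρ => compound k (genPerm π c) ρ σ₀)
        = (compound k (genPerm π c) τ σ₀) • (Pi.single τ (1:ℝ) : Combo (2*n) k → ℝ) := by
      funext ρ
      by_cases h : ρ = τ
      · subst h; simp [Pi.single_apply]
      · rw [compound_genPerm_apply_eq_zero π c himg h]
        simp [Pi.single_apply, h]
    rw [hvec] at hmem
    have hmem2 := W.smul_mem (compound k (genPerm π c) τ σ₀)⁻¹ hmem
    rwa [smul_smul, inv_mul_cancel₀ hr, one_smul] at hmem2
  -- conclude
  rw [eq_top_iff]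
  intro x _
  have hxsum : x = ∑ τ : Combo (2*n) k, x τ • (Pi.single τ (1:ℝ) : Combo (2*n) k → ℝ) := by
    funext ρ
    rw [Finset.sum_apply]
    simp [Pi.single_apply]
  rw [hxsum]
  exact Submodule.sum_mem W (fun τ _ => W.smul_mem _ (hall τ))
end

section
/- Let d ≥ 1 and 1 ≤ j ≤ d. For all j-combinations σ, τ of {0,…,d−1}: Σ_{Q ∈ Sym⁺(2,d)} det(Q_{σ,τ})² = (2^{d−1} · d!) / binom(d,j); equivalently, the number of d×d signed permutation matrices Q with determinant 1 such that det(Q_{σ,τ}) ≠ 0 equals |Sym⁺(2,d)| / binom(d,j). -/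
open Classical

noncomputable def sg (b : Bool) : ℝ := if b then 1 else -1

lemma sg_ne_zero (b : Bool) : sg b ≠ 0 := by cases b <;> norm_num [sg]

lemma sg_sq (b : Bool) : sg b ^ 2 = 1 := by cases b <;> norm_num [sg]

lemma sg_eq_or (b : Bool) : sg b = 1 ∨ sg b = -1 := by cases b <;> simp [sg]

lemma sg_inj : Function.Injective sg := by
  intro a b h; cases a <;> cases b <;> simp_all [sg] <;> norm_num at h

noncomputable def spm {d : ℕ} (p : Equiv.Perm (Fin d) × (Fin d → Bool)) :
    Matrix (Fin d) (Fin d) ℝ :=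
  Matrix.of fun i k => if p.1 i = k then sg (p.2 i) else 0

lemma spm_eq {d : ℕ} (p : Equiv.Perm (Fin d) × (Fin d → Bool)) :
    spm p = Matrix.diagonal (fun i => sg (p.2 i)) * (p.1.permMatrix ℝ) := by
  ext i k
  simp [spm, Matrix.diagonal_mul, PEquiv.toMatrix_apply, Equiv.toPEquiv_apply,
    Option.mem_def, eq_comm]

lemma det_spm {d : ℕ} (p : Equiv.Perm (Fin d) × (Fin d → Bool)) :
    (spm p).det = (∏ i, sg (p.2 i)) * ((Equiv.Perm.sign p.1 : ℤ) : ℝ) := by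
  rw [spm_eq, Matrix.det_mul, Matrix.det_diagonal, Matrix.det_permutation]

lemma spm_injective {d : ℕ} : Function.Injective (spm (d := d)) := by
  rintro ⟨π, b⟩ ⟨π', b'⟩ h
  have hp : π = π' := by
    ext i
    have := congrFun (congrFun h i) (π i)
    simp only [spm, Matrix.of_apply, if_pos rfl] at this
    by_contra hne
    rw [if_neg (fun hh : π' i = π i => hne (congrArg Fin.val hh.symm))] at this
    exact sg_ne_zero _ this
  subst hp
  have hb : b = b' := by
    funext i
    have := congrFun (congrFun h i) (π i)
    simp only [spm, Matrix.of_apply, if_pos rfl] at this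
    exact sg_inj this
  rw [hb]

lemma isSignedPerm_iff {d : ℕ} (Q : Matrix (Fin d) (Fin d) ℝ) :
    IsSignedPerm Q ↔ ∃ p, spm p = Q := by
  constructor
  · rintro ⟨h0, h1, h2⟩
    have hex : ∀ i, ∃ k, Q i k ≠ 0 := fun i => (h1 i).exists
    choose g hg using hex
    have hginj : Function.Injective g := by
      intro i i' he
      exact (h2 (g i)).unique (hg i) (by rw [he]; exact hg i')
    have hbij : Function.Bijective g := Finite.injective_iff_bijective.mp hginj
    refine ⟨⟨Equiv.ofBijective g hbij, fun i => if Q i (g i) = 1 then true else false⟩, ?_⟩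
    ext i k
    simp only [spm, Matrix.of_apply, Equiv.ofBijective_apply]
    by_cases h : g i = k
    · subst h
      rw [if_pos rfl]
      rcases h0 i (g i) with h' | h' | h'
      · exact absurd h' (hg i)
      · simp [sg, h']
      · rw [if_neg (by rw [h']; norm_num), h']
        simp [sg]
    · rw [if_neg h]
      by_contra hne
      exact h (((h1 i).unique (hg i) (Ne.symm hne)))
  · rintro ⟨⟨π, b⟩, rfl⟩
    refine ⟨fun i k => ?_, fun i => ⟨π i, ?_, fun k hk => ?_⟩, fun k => ⟨π.symm k, ?_, fun i hi => ?_⟩⟩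
    · by_cases h : π i = k <;> simp [spm, h] <;> rcases sg_eq_or (b i) with h' | h' <;> simp [h']
    · simp [spm, sg_ne_zero]
    · by_contra hne; exact hk (by simp only [spm, Matrix.of_apply, if_neg (fun h : π i = k => hne h.symm)])
    · simp [spm, sg_ne_zero]
    · by_contra hne
      apply hi
      have : π i ≠ k := fun h => hne (by rw [← h]; simp)
      simp [spm, this]

lemma det_spm_submatrix_sq {d j : ℕ} (p : Equiv.Perm (Fin d) × (Fin d → Bool))
    (σ τ : Fin j → Fin d) (hσ : Function.Injective σ) (hτ : Function.Injective τ) :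
    ((spm p).submatrix σ τ).det ^ 2 =
      if Finset.image (fun x => p.1 (σ x)) Finset.univ = Finset.image τ Finset.univ
      then 1 else 0 := by
  obtain ⟨π, b⟩ := p
  by_cases h : Finset.image (fun x => π (σ x)) Finset.univ = Finset.image τ Finset.univ
  · rw [if_pos h]
    have hex : ∀ a : Fin j, ∃ c : Fin j, τ c = π (σ a) := by
      intro a
      have : π (σ a) ∈ Finset.image τ Finset.univ := by
        rw [← h]; exact Finset.mem_image_of_mem _ (Finset.mem_univ a)
      simpa [Finset.mem_image, eq_comm] using this
    choose g hg using hex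
    have hginj : Function.Injective g := by
      intro a a' he
      have h2 : π (σ a) = π (σ a') := by rw [← hg a, ← hg a', he]
      exact hσ (π.injective h2)
    let e : Equiv.Perm (Fin j) := Equiv.ofBijective g (Finite.injective_iff_bijective.mp hginj)
    have hm : (spm (π, b)).submatrix σ τ =
        Matrix.diagonal (fun a => sg (b (σ a))) * (e.permMatrix ℝ) := by
      ext a c
      simp only [Matrix.submatrix_apply, spm, Matrix.of_apply, Matrix.diagonal_mul,
        PEquiv.toMatrix_apply, Equiv.toPEquiv_apply, Option.mem_def, Option.some.injEq]
      have : π (σ a) = τ c ↔ e a = c := by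
        constructor
        · intro hh; exact hτ (by rw [hg a, hh] : τ (g a) = τ c)
        · intro hh
          rw [← hg a, show g a = e a from rfl, hh]
      by_cases hc : π (σ a) = τ c
      · rw [if_pos hc, if_pos (this.mp hc), mul_one]
      · rw [if_neg hc, if_neg (fun hh => hc (this.mpr hh)), mul_zero]
    rw [hm, Matrix.det_mul, Matrix.det_diagonal, Matrix.det_permutation]
    rw [mul_pow, ← Finset.prod_pow]
    simp only [sg_sq, Finset.prod_const_one, one_mul]
    rcases Int.units_eq_one_or (Equiv.Perm.sign e) with hs | hs <;> rw [hs] <;> norm_num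
  · rw [if_neg h]
    have hcard : (Finset.image τ (Finset.univ : Finset (Fin j))).card ≤
        (Finset.image (fun x => π (σ x)) Finset.univ).card := by
      rw [Finset.card_image_of_injective _ hτ,
        Finset.card_image_of_injective _ (fun a a' hh => hσ (π.injective hh))]
    have : ¬ (Finset.image (fun x => π (σ x)) Finset.univ ⊆ Finset.image τ Finset.univ) :=
      fun hsub => h (Finset.eq_of_subset_of_card_le hsub hcard)
    rw [Finset.not_subset] at this
    obtain ⟨x, hx, hxB⟩ := this
    rw [Finset.mem_image] at hx
    obtain ⟨a, -, rfl⟩ := hx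
    have hrow : ∀ c, ((spm (π, b)).submatrix σ τ) a c = 0 := by
      intro c
      have : π (σ a) ≠ τ c := fun hh => hxB (hh ▸ Finset.mem_image_of_mem _ (Finset.mem_univ c))
      simp [spm, this]
    rw [Matrix.det_eq_zero_of_row_eq_zero a hrow]
    norm_num

lemma sg_not (x : Bool) : sg (!x) = - sg x := by cases x <;> simp [sg]

lemma prod_sg_mem {d : ℕ} (b : Fin d → Bool) :
    (∏ i, sg (b i)) = 1 ∨ (∏ i, sg (b i)) = -1 := by
  rw [← mul_self_eq_one_iff, ← Finset.prod_mul_distrib]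
  refine Finset.prod_eq_one fun i _ => ?_
  cases b i <;> norm_num [sg]

lemma count_signs {d : ℕ} (hd : 1 ≤ d) (s : ℝ) (hs : s = 1 ∨ s = -1) :
    (Finset.univ.filter fun b : Fin d → Bool => (∏ i, sg (b i)) = s).card = 2 ^ (d - 1) := by
  set i0 : Fin d := ⟨0, hd⟩ with hi0
  have key : ∀ b : Fin d → Bool,
      (∏ i, sg (Function.update b i0 (!(b i0)) i)) = -(∏ i, sg (b i)) := by
    intro b
    rw [← Finset.mul_prod_erase Finset.univ (fun i => sg (Function.update b i0 (!(b i0)) i))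
      (Finset.mem_univ i0),
      ← Finset.mul_prod_erase Finset.univ (fun i => sg (b i)) (Finset.mem_univ i0)]
    rw [Function.update_self, sg_not, neg_mul]
    congr 1
    congr 1
    refine Finset.prod_congr rfl fun i hi => ?_
    rw [Function.update_of_ne (Finset.ne_of_mem_erase hi)]
  have hflip : ∀ b : Fin d → Bool,
      Function.update (Function.update b i0 (!(b i0))) i0 (!(Function.update b i0 (!(b i0)) i0)) = b := by
    intro b
    funext i
    by_cases h : i = i0
    · subst h; simp
    · simp [Function.update_of_ne h]
  have hcards : (Finset.univ.filter fun b : Fin d → Bool => (∏ i, sg (b i)) = 1).card =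
      (Finset.univ.filter fun b : Fin d → Bool => (∏ i, sg (b i)) = -1).card := by
    refine Finset.card_bij' (fun b _ => Function.update b i0 (!(b i0)))
      (fun b _ => Function.update b i0 (!(b i0))) ?_ ?_ ?_ ?_ <;>
      (intro b hb;
       first
        | exact hflip b
        | (simp only [Finset.mem_filter, Finset.mem_univ, true_and] at hb ⊢;
           rw [key, hb]; try norm_num))
  have hsplit : (Finset.univ.filter fun b : Fin d → Bool => (∏ i, sg (b i)) = 1).card +
      (Finset.univ.filter fun b : Fin d → Bool => (∏ i, sg (b i)) = -1).card = 2 ^ d := by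
    have hneg : (Finset.univ.filter fun b : Fin d → Bool => ¬ ((∏ i, sg (b i)) = 1)) =
        (Finset.univ.filter fun b : Fin d → Bool => (∏ i, sg (b i)) = -1) := by
      refine Finset.filter_congr fun b _ => ?_
      rcases prod_sg_mem b with h | h <;> rw [h] <;> norm_num
    rw [← hneg, Finset.card_filter_add_card_filter_not]
    simp [Finset.card_univ]
  have h2 : 2 ^ d = 2 * 2 ^ (d - 1) := by
    rw [← pow_succ']
    congr 1
    exact (Nat.succ_pred_eq_of_pos hd).symm
  rw [hcards, ← two_mul, h2] at hsplit
  have h1 := Nat.eq_of_mul_eq_mul_left (by norm_num : 0 < 2) hsplit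
  rcases hs with rfl | rfl
  · rw [hcards]; exact h1
  · exact h1

lemma count_perms {d j : ℕ} (hjd : j ≤ d) (σ τ : Fin j → Fin d)
    (hσ : Function.Injective σ) (hτ : Function.Injective τ) :
    (Finset.univ.filter fun π : Equiv.Perm (Fin d) =>
        Finset.image (fun x => π (σ x)) Finset.univ = Finset.image τ Finset.univ).card =
      j.factorial * (d - j).factorial := by
  classical
  set A : Finset (Fin d) := Finset.image σ Finset.univ with hA
  set B : Finset (Fin d) := Finset.image τ Finset.univ with hB
  have hAcard : A.card = j := by
    rw [hA, Finset.card_image_of_injective _ hσ, Finset.card_univ, Fintype.card_fin]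
  have hBcard : B.card = j := by
    rw [hB, Finset.card_image_of_injective _ hτ, Finset.card_univ, Fintype.card_fin]
  have hcond : ∀ π : Equiv.Perm (Fin d),
      (Finset.image (fun x => π (σ x)) Finset.univ = B) ↔ A.image (fun x => π x) = B := by
    intro π
    rw [hA, Finset.image_image]
    rfl
  set Φ : (({x // x ∈ A} ≃ {x // x ∈ B}) × ({x // x ∉ A} ≃ {x // x ∉ B})) →
      Equiv.Perm (Fin d) := fun ef =>
    ((Equiv.sumCompl (· ∈ A)).symm.trans ((ef.1.sumCongr ef.2).trans (Equiv.sumCompl (· ∈ B))))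
    with hΦ
  have hΦ_pos : ∀ ef x (h : x ∈ A), Φ ef x = (ef.1 ⟨x, h⟩ : Fin d) := by
    intro ef x h
    simp [hΦ, Equiv.sumCompl_symm_apply_of_pos h]
  have hΦ_neg : ∀ ef x (h : x ∉ A), Φ ef x = (ef.2 ⟨x, h⟩ : Fin d) := by
    intro ef x h
    simp [hΦ, Equiv.sumCompl_symm_apply_of_neg h]
  have hΦinj : Function.Injective Φ := by
    intro ef ef' h
    have h1 : ef.1 = ef'.1 := by
      ext a
      have hthis : Φ ef a = Φ ef' a := by rw [h]
      rw [hΦ_pos ef a a.2, hΦ_pos ef' a a.2] at hthis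
      exact congrArg Fin.val hthis
    have h2 : ef.2 = ef'.2 := by
      ext a
      have hthis : Φ ef a = Φ ef' a := by rw [h]
      rw [hΦ_neg ef a a.2, hΦ_neg ef' a a.2] at hthis
      exact congrArg Fin.val hthis
    exact Prod.ext h1 h2
  have hΦmem : ∀ ef, A.image (fun x => Φ ef x) = B := by
    intro ef
    apply Finset.eq_of_subset_of_card_le
    · intro y hy
      rw [Finset.mem_image] at hy
      obtain ⟨x, hx, rfl⟩ := hy
      rw [hΦ_pos ef x hx]
      exact (ef.1 ⟨x, hx⟩).2
    · rw [hBcard, Finset.card_image_of_injective _ (Equiv.injective _), hAcard]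
  have hΦsurj : ∀ π : Equiv.Perm (Fin d), A.image (fun x => π x) = B → ∃ ef, Φ ef = π := by
    intro π hπ
    have hmem : ∀ x, x ∈ A ↔ π x ∈ B := by
      intro x
      constructor
      · intro hx; rw [← hπ]; exact Finset.mem_image_of_mem _ hx
      · intro hx
        rw [← hπ, Finset.mem_image] at hx
        obtain ⟨y, hy, hyx⟩ := hx
        rwa [← π.injective hyx]
    refine ⟨⟨π.subtypeEquiv hmem, π.subtypeEquiv fun x => not_iff_not.mpr (hmem x)⟩, ?_⟩
    ext x
    by_cases h : x ∈ A
    · rw [hΦ_pos _ x h]; rfl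
    · rw [hΦ_neg _ x h]; rfl
  have himage : (Finset.univ.filter fun π : Equiv.Perm (Fin d) =>
      Finset.image (fun x => π (σ x)) Finset.univ = Finset.image τ Finset.univ) =
      Finset.image Φ Finset.univ := by
    ext π
    simp only [Finset.mem_filter, Finset.mem_univ, true_and, Finset.mem_image, ← hB]
    rw [hcond]
    constructor
    · intro h
      obtain ⟨ef, hef⟩ := hΦsurj π h
      exact ⟨ef, hef⟩
    · rintro ⟨ef, rfl⟩
      exact hΦmem ef
  rw [himage, Finset.card_image_of_injective _ hΦinj, Finset.card_univ, Fintype.card_prod]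
  have e1 : Fintype.card {x // x ∈ A} = j := by rw [Fintype.card_coe, hAcard]
  have e2 : Fintype.card {x // x ∈ B} = j := by rw [Fintype.card_coe, hBcard]
  have e3 : Fintype.card {x // x ∉ A} = d - j := by
    rw [Fintype.card_subtype_compl, Fintype.card_fin, Fintype.card_coe, hAcard]
  have e4 : Fintype.card {x // x ∉ B} = d - j := by
    rw [Fintype.card_subtype_compl, Fintype.card_fin, Fintype.card_coe, hBcard]
  rw [Fintype.card_equiv (Fintype.equivOfCardEq (by rw [e1, e2])),
    Fintype.card_equiv (Fintype.equivOfCardEq (by rw [e3, e4])), e1, e3]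

/-- Let `S = Sym⁺(2,d)` be the (finite) set of `d × d` signed permutation matrices with
determinant `1`, and let `σ, τ` be `j`-combinations (strictly increasing tuples). Then
`∑_{Q ∈ S} det (Q_{σ,τ})² = 2^{d-1} d! / C(d,j)`; equivalently, the number of `Q ∈ S`
with `det (Q_{σ,τ}) ≠ 0` equals `|S| / C(d,j)`. -/
theorem signedPerm_subdeterminant_density
    (d j : ℕ) (hd : 1 ≤ d) (hj : 1 ≤ j) (hjd : j ≤ d)
    (S : Finset (Matrix (Fin d) (Fin d) ℝ))
    (hS : ∀ Q, Q ∈ S ↔ IsSignedPerm Q ∧ Q.det = 1)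
    (σ τ : Fin j → Fin d) (hσ : StrictMono σ) (hτ : StrictMono τ) :
    (∑ Q ∈ S, ((Q.submatrix σ τ).det) ^ 2 =
        (2 ^ (d-1) * d.factorial : ℝ) / (d.choose j : ℝ)) ∧
    (((S.filter fun Q => (Q.submatrix σ τ).det ≠ 0).card : ℝ) =
        (S.card : ℝ) / (d.choose j : ℝ)) := by
  classical
  have hC0 : (d.choose j : ℝ) ≠ 0 := Nat.cast_ne_zero.mpr (Nat.choose_pos hjd).ne'
  set D := Finset.univ.filter
    (fun p : Equiv.Perm (Fin d) × (Fin d → Bool) => (spm p).det = 1) with hD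
  have hSD : S = Finset.image spm D := by
    ext Q
    rw [hS, hD]
    constructor
    · rintro ⟨hsp, hdet⟩
      obtain ⟨p, rfl⟩ := (isSignedPerm_iff _).mp hsp
      exact Finset.mem_image_of_mem _ (Finset.mem_filter.mpr ⟨Finset.mem_univ _, hdet⟩)
    · intro hQ
      rw [Finset.mem_image] at hQ
      obtain ⟨p, hp, rfl⟩ := hQ
      exact ⟨(isSignedPerm_iff _).mpr ⟨p, rfl⟩, (Finset.mem_filter.mp hp).2⟩
  have hsum : ∀ F : Matrix (Fin d) (Fin d) ℝ → ℝ, ∑ Q ∈ S, F Q = ∑ p ∈ D, F (spm p) := by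
    intro F
    rw [hSD, Finset.sum_image (fun p _ q _ h => spm_injective h)]
  have hcount_det : ∀ π : Equiv.Perm (Fin d),
      (Finset.univ.filter fun b : Fin d → Bool => (spm (π, b)).det = 1).card = 2 ^ (d-1) := by
    intro π
    rcases Int.units_eq_one_or (Equiv.Perm.sign π) with hs | hs
    · rw [show (Finset.univ.filter fun b : Fin d → Bool => (spm (π, b)).det = 1)
          = Finset.univ.filter fun b : Fin d → Bool => (∏ i, sg (b i)) = 1 from
          Finset.filter_congr fun b _ => by simp [det_spm, hs]]
      exact count_signs hd 1 (Or.inl rfl)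
    · rw [show (Finset.univ.filter fun b : Fin d → Bool => (spm (π, b)).det = 1)
          = Finset.univ.filter fun b : Fin d → Bool => (∏ i, sg (b i)) = -1 from
          Finset.filter_congr fun b _ => by
            simp only [det_spm, hs]
            push_cast
            constructor <;> intro h <;> linarith]
      exact count_signs hd (-1) (Or.inr rfl)
  -- the main sum computation
  have key1 : ∑ Q ∈ S, ((Q.submatrix σ τ).det) ^ 2
      = (2:ℝ)^(d-1) * ((j.factorial * (d-j).factorial : ℕ) : ℝ) := by
    rw [hsum, hD, Finset.sum_filter, Fintype.sum_prod_type]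
    have inner : ∀ π : Equiv.Perm (Fin d),
        (∑ b : Fin d → Bool,
          if (spm (π, b)).det = 1 then ((spm (π, b)).submatrix σ τ).det ^ 2 else 0)
        = (if Finset.image (fun x => π (σ x)) Finset.univ = Finset.image τ Finset.univ
            then (1:ℝ) else 0) * (2:ℝ)^(d-1) := by
      intro π
      have hv : ∀ b : Fin d → Bool, ((spm (π, b)).submatrix σ τ).det ^ 2 =
          (if Finset.image (fun x => π (σ x)) Finset.univ = Finset.image τ Finset.univ
            then (1:ℝ) else 0) :=
        fun b => det_spm_submatrix_sq (π, b) σ τ hσ.injective hτ.injective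
      simp_rw [hv]
      rw [← Finset.sum_filter, Finset.sum_const, hcount_det π, nsmul_eq_mul]
      push_cast
      ring
    rw [Finset.sum_congr rfl (fun π _ => inner π), ← Finset.sum_mul, Finset.sum_boole,
      count_perms hjd σ τ hσ.injective hτ.injective]
    ring
  have hrhs : (2:ℝ)^(d-1) * ((j.factorial * (d-j).factorial : ℕ) : ℝ)
      = (2 ^ (d-1) * d.factorial : ℝ) / (d.choose j : ℝ) := by
    rw [eq_div_iff hC0]
    have hnat := Nat.choose_mul_factorial_mul_factorial hjd
    have : ((d.choose j * j.factorial * (d-j).factorial : ℕ) : ℝ) = (d.factorial : ℕ) := by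
      rw [hnat]
    push_cast at this ⊢
    linear_combination (2:ℝ)^(d-1) * this
  have key2 : (S.card : ℝ) = (2:ℝ)^(d-1) * (d.factorial : ℝ) := by
    have h0 : (S.card : ℝ) = ∑ Q ∈ S, (1:ℝ) := by
      rw [Finset.sum_const, nsmul_eq_mul, mul_one]
    rw [h0, hsum, hD, Finset.sum_filter, Fintype.sum_prod_type]
    have inner : ∀ π : Equiv.Perm (Fin d),
        (∑ b : Fin d → Bool, if (spm (π, b)).det = 1 then (1:ℝ) else 0) = (2:ℝ)^(d-1) := by
      intro π
      rw [Finset.sum_boole, hcount_det π]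
      push_cast
      ring
    rw [Finset.sum_congr rfl (fun π _ => inner π), Finset.sum_const, Finset.card_univ,
      Fintype.card_perm, Fintype.card_fin, nsmul_eq_mul]
    ring
  have hpt : ∀ Q ∈ S, ((Q.submatrix σ τ).det) ^ 2 =
      (if (Q.submatrix σ τ).det ≠ 0 then (1:ℝ) else 0) := by
    intro Q hQ
    obtain ⟨p, rfl⟩ := (isSignedPerm_iff Q).mp ((hS Q).mp hQ).1
    have hsq := det_spm_submatrix_sq p σ τ hσ.injective hτ.injective
    by_cases h : Finset.image (fun x => p.1 (σ x)) Finset.univ = Finset.image τ Finset.univ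
    · rw [if_pos h] at hsq
      have hne : ((spm p).submatrix σ τ).det ≠ 0 := by
        intro h0
        rw [h0] at hsq
        norm_num at hsq
      rw [hsq, if_pos hne]
    · rw [if_neg h] at hsq
      have hz : ((spm p).submatrix σ τ).det = 0 :=
        (pow_eq_zero_iff (by norm_num : (2:ℕ) ≠ 0)).mp hsq
      rw [hsq, hz]
      simp
  have key3 : ((S.filter fun Q => (Q.submatrix σ τ).det ≠ 0).card : ℝ) =
      ∑ Q ∈ S, ((Q.submatrix σ τ).det) ^ 2 := by
    rw [Finset.sum_congr rfl hpt, Finset.sum_boole]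
  refine ⟨key1.trans hrhs, ?_⟩
  rw [key3, key1.trans hrhs, key2]
end

section
/- Let d ≥ 1, 1 ≤ k ≤ d, and let μ, ν be k-combinations of {0,…,d−1} such that μ ≠ ν and the underlying set of ν is not the complement in {0,…,d−1} of the underlying set of μ. Then Σ_{Q ∈ Sym⁺(2,d)} det(Q_{μ,μ}) · det(Q_{ν,ν}) = 0. -/
open Classical

/-- Let `S = Sym⁺(2,d)` be the set of `d × d` signed permutation matrices with
determinant `1`, and let `μ ≠ ν` be `k`-combinations (strictly increasing tuples) such
that the underlying set of `ν` is not the complement of the underlying set of `μ`. Then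
`∑_{Q ∈ S} det (Q_{μ,μ}) · det (Q_{ν,ν}) = 0`. -/
theorem signedPerm_offdiagonal_character_sum
    (d k : ℕ) (hd : 1 ≤ d) (hk : 1 ≤ k) (hkd : k ≤ d)
    (S : Finset (Matrix (Fin d) (Fin d) ℝ))
    (hS : ∀ Q, Q ∈ S ↔ IsSignedPerm Q ∧ Q.det = 1)
    (μ ν : Fin k → Fin d) (hμ : StrictMono μ) (hν : StrictMono ν)
    (hne : μ ≠ ν)
    (hcompl : Finset.image ν Finset.univ ≠ (Finset.image μ Finset.univ)ᶜ) :
    ∑ Q ∈ S, (Q.submatrix μ μ).det * (Q.submatrix ν ν).det = 0 := by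
  classical
  set Mμ := Finset.image μ Finset.univ with hMμ
  set Mν := Finset.image ν Finset.univ with hMν
  -- the image sets are distinct
  have himg : Mμ ≠ Mν := by
    intro h
    apply hne
    have hw : WellFoundedLT (Fin k) := inferInstance
    refine (@StrictMono.range_inj (Fin k) (Fin d) inferInstance inferInstance hw μ ν hμ hν).mp ?_
    have hc : (Mμ : Set (Fin d)) = (Mν : Set (Fin d)) := by rw [h]
    simpa [hMμ, hMν, Finset.coe_image, Set.image_univ] using hc
  -- an element of the symmetric difference
  obtain ⟨i, hi⟩ : ∃ x, (x ∈ Mμ ∧ x ∉ Mν) ∨ (x ∈ Mν ∧ x ∉ Mμ) := by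
    by_contra h
    push_neg at h
    apply himg
    ext x
    have := h x
    tauto
  -- an element not in the symmetric difference
  obtain ⟨j, hj⟩ : ∃ x, (x ∈ Mμ ↔ x ∈ Mν) := by
    by_contra h
    push_neg at h
    apply hcompl
    ext x
    have := h x
    simp only [Finset.mem_compl]
    tauto
  have hij : i ≠ j := by
    intro h
    subst h
    tauto
  -- the sign vector and the diagonal sign matrix
  set ε : Fin d → ℝ := fun x => if x = i ∨ x = j then -1 else 1 with hεdef
  set D : Matrix (Fin d) (Fin d) ℝ := Matrix.diagonal ε with hDdef
  have hε_split : ∀ x, ε x = (if x = i then (-1 : ℝ) else 1) * (if x = j then (-1 : ℝ) else 1) := by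
    intro x
    by_cases h1 : x = i
    · subst h1
      have : ¬ (x = j) := hij
      simp [hεdef, this]
    · by_cases h2 : x = j
      · subst h2
        simp [hεdef, h1]
      · simp [hεdef, h1, h2]
  have hεsq : ∀ x, ε x * ε x = 1 := by
    intro x
    by_cases h : x = i ∨ x = j <;> simp [hεdef, h]
  have hεne : ∀ x, ε x ≠ 0 := by
    intro x
    by_cases h : x = i ∨ x = j <;> simp [hεdef, h]
  have hDD : D * D = 1 := by
    rw [hDdef, Matrix.diagonal_mul_diagonal]
    have h1 : (fun x => ε x * ε x) = fun _ => (1 : ℝ) := funext hεsq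
    rw [h1, Matrix.diagonal_one]
  have hdetD : D.det = 1 := by
    rw [hDdef, Matrix.det_diagonal]
    calc ∏ x, ε x
        = ∏ x, ((if x = i then (-1 : ℝ) else 1) * (if x = j then (-1 : ℝ) else 1)) :=
          Finset.prod_congr rfl fun x _ => hε_split x
      _ = (∏ x, (if x = i then (-1 : ℝ) else 1)) * ∏ x, (if x = j then (-1 : ℝ) else 1) :=
          Finset.prod_mul_distrib
      _ = 1 := by rw [Finset.prod_ite_eq', Finset.prod_ite_eq']; simp
  -- product of signs over an injective tuple
  have prod_eps : ∀ (f : Fin k → Fin d), Function.Injective f →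
      (∏ t, ε (f t)) = (if i ∈ Finset.image f Finset.univ then (-1 : ℝ) else 1) *
        (if j ∈ Finset.image f Finset.univ then (-1 : ℝ) else 1) := by
    intro f hf
    rw [← Finset.prod_image (f := ε) (g := f) (fun a _ b _ h => hf h)]
    calc ∏ x ∈ Finset.image f Finset.univ, ε x
        = ∏ x ∈ Finset.image f Finset.univ,
            ((if x = i then (-1 : ℝ) else 1) * (if x = j then (-1 : ℝ) else 1)) :=
          Finset.prod_congr rfl fun x _ => hε_split x
      _ = _ := by rw [Finset.prod_mul_distrib, Finset.prod_ite_eq', Finset.prod_ite_eq']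
  have hsign : (∏ t, ε (μ t)) * (∏ t, ε (ν t)) = -1 := by
    rw [prod_eps μ hμ.injective, prod_eps ν hν.injective, ← hMμ, ← hMν]
    by_cases hjm : j ∈ Mμ
    · have hjn : j ∈ Mν := hj.mp hjm
      rcases hi with ⟨h1, h2⟩ | ⟨h1, h2⟩ <;> simp [h1, h2, hjm, hjn]
    · have hjn : j ∉ Mν := fun h => hjm (hj.mpr h)
      rcases hi with ⟨h1, h2⟩ | ⟨h1, h2⟩ <;> simp [h1, h2, hjm, hjn]
  -- multiplication by D preserves S
  have step : ∀ Q ∈ S, Q * D ∈ S := by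
    intro Q hQ
    rw [hS] at hQ ⊢
    obtain ⟨⟨hent, hrow, hcol⟩, hdet⟩ := hQ
    have hmd : ∀ a b, (Q * D) a b = Q a b * ε b := fun a b => Matrix.mul_diagonal ε Q a b
    refine ⟨⟨?_, ?_, ?_⟩, ?_⟩
    · intro a b
      rw [hmd]
      rcases hent a b with h | h | h <;> by_cases hb : b = i ∨ b = j <;>
        simp [hεdef, h, hb]
    · intro a
      refine (existsUnique_congr fun b => ?_).mpr (hrow a)
      rw [hmd, mul_ne_zero_iff]
      exact ⟨fun h => h.1, fun h => ⟨h, hεne b⟩⟩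
    · intro b
      refine (existsUnique_congr fun a => ?_).mpr (hcol b)
      rw [hmd, mul_ne_zero_iff]
      exact ⟨fun h => h.1, fun h => ⟨h, hεne b⟩⟩
    · rw [Matrix.det_mul, hdet, hdetD, one_mul]
  -- submatrix of Q * D
  have hsub : ∀ (Q : Matrix (Fin d) (Fin d) ℝ) (f : Fin k → Fin d),
      (Q * D).submatrix f f = (Q.submatrix f f) * Matrix.diagonal (fun t => ε (f t)) := by
    intro Q f
    ext a b
    rw [Matrix.mul_diagonal, Matrix.submatrix_apply, Matrix.submatrix_apply, hDdef,
      Matrix.mul_diagonal]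
  have hneg : ∀ Q : Matrix (Fin d) (Fin d) ℝ,
      ((Q * D).submatrix μ μ).det * ((Q * D).submatrix ν ν).det =
        -((Q.submatrix μ μ).det * (Q.submatrix ν ν).det) := by
    intro Q
    rw [hsub Q μ, hsub Q ν, Matrix.det_mul, Matrix.det_mul, Matrix.det_diagonal,
      Matrix.det_diagonal, mul_mul_mul_comm, hsign]
    ring
  -- the involution argument
  have hinv : ∀ Q ∈ S, (Q * D) * D = Q := by
    intro Q _
    rw [mul_assoc, hDD, mul_one]
  have key : ∑ Q ∈ S, (Q.submatrix μ μ).det * (Q.submatrix ν ν).det =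
      ∑ Q ∈ S, -((Q.submatrix μ μ).det * (Q.submatrix ν ν).det) := by
    refine Finset.sum_nbij' (fun Q => Q * D) (fun Q => Q * D) step step hinv hinv ?_
    intro Q _
    rw [hneg Q]
    ring
  rw [Finset.sum_neg_distrib] at key
  linarith
end

section
/- Let d ≥ 1 and 1 ≤ j ≤ d, let G be a nonempty finite set of d×d signed permutation matrices, and let D be any set of j-combinations of {0,…,d−1}. For each j-combination τ define λ_τ := (1/|G|) · Σ_{Q∈G} Σ_{σ∈D} det(Q_{σ,τ})². Then the minimum of λ_τ over all j-combinations τ is at most |D| / binom(d,j). (In particular, no ensemble of signed permutation matrices can make all the quantities λ_τ exceed |D|/binom(d,j), which is the optimality underlying the claim that no subgroup of fermionic Gaussian Clifford unitaries achieves a smaller shadow norm than binom(2n,2k)/binom(n,k).) -/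
open Classical

lemma signedPerm_exists_pi {d : ℕ} {Q : Matrix (Fin d) (Fin d) ℝ} (hQ : IsSignedPerm Q) :
    ∃ π : Fin d → Fin d, Function.Injective π ∧ (∀ i, (Q i (π i)) ^ 2 = 1) ∧
      ∀ i k, k ≠ π i → Q i k = 0 := by
  choose π h1 h2 using hQ.2.1
  refine ⟨π, ?_, ?_, ?_⟩
  · intro i i' h
    obtain ⟨k, _, hk2⟩ := hQ.2.2 (π i)
    rw [hk2 i (h1 i), hk2 i' (by rw [h]; exact h1 i')]
  · intro i
    rcases hQ.1 i (π i) with h | h | h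
    · exact absurd h (h1 i)
    · rw [h]; ring
    · rw [h]; ring
  · intro i k hk
    by_contra h
    exact hk (h2 i k h)

/-- Key lemma: for a signed permutation matrix `Q` and a strictly monotone `σ`,
the sum over all strictly monotone `τ` of `det(Q_{σ,τ})²` equals one. -/
lemma sum_det_sq_eq_one {d j : ℕ} {Q : Matrix (Fin d) (Fin d) ℝ} (hQ : IsSignedPerm Q)
    (σ : Fin j → Fin d) (hσ : StrictMono σ) :
    ∑ τ : {f : Fin j → Fin d // StrictMono f}, ((Q.submatrix σ τ.1).det) ^ 2 = 1 := by
  obtain ⟨π, hπinj, hπsq, hπzero⟩ := signedPerm_exists_pi hQ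
  set S : Finset (Fin d) := Finset.image (fun a => π (σ a)) Finset.univ with hSdef
  have hinj : Function.Injective (fun a => π (σ a)) := hπinj.comp hσ.injective
  have hS : S.card = j := by
    rw [hSdef, Finset.card_image_of_injective _ hinj, Finset.card_univ, Fintype.card_fin]
  set τ₀ : {f : Fin j → Fin d // StrictMono f} :=
    ⟨S.orderEmbOfFin hS, (S.orderEmbOfFin hS).strictMono⟩ with hτ₀def
  rw [Fintype.sum_eq_single τ₀]
  · -- value at τ₀ is 1
    set M := Q.submatrix σ (τ₀.1) with hM
    have hMT : M * M.transpose = 1 := by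
      ext a a'
      rw [Matrix.mul_apply, Matrix.one_apply]
      by_cases hee : a = a'
      · subst hee
        simp only [if_pos rfl]
        have hmem : π (σ a) ∈ S := Finset.mem_image_of_mem _ (Finset.mem_univ a)
        have : π (σ a) ∈ Set.range (S.orderEmbOfFin hS) := by
          rw [Finset.range_orderEmbOfFin]; exact hmem
        obtain ⟨b₀, hb₀⟩ := this
        rw [Finset.sum_eq_single b₀]
        · simp only [hM, Matrix.submatrix_apply, Matrix.transpose_apply]
          rw [if_pos trivial, show τ₀.1 b₀ = π (σ a) from hb₀, ← sq]
          exact hπsq (σ a)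
        · intro b _ hb
          have : τ₀.1 b ≠ π (σ a) := by
            rw [← hb₀]
            exact fun h => hb ((S.orderEmbOfFin hS).injective h)
          simp only [hM, Matrix.submatrix_apply, Matrix.transpose_apply]
          rw [hπzero _ _ this, zero_mul]
        · intro h; exact absurd (Finset.mem_univ b₀) h
      · rw [if_neg hee]
        apply Finset.sum_eq_zero
        intro b _
        simp only [hM, Matrix.submatrix_apply, Matrix.transpose_apply]
        by_cases h1 : τ₀.1 b = π (σ a)
        · have h2 : τ₀.1 b ≠ π (σ a') := by
            rw [h1]
            intro h
            exact hee (hσ.injective (hπinj h))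
          rw [hπzero _ _ h2, mul_zero]
        · rw [hπzero _ _ h1, zero_mul]
    have : M.det ^ 2 = (M * M.transpose).det := by
      rw [Matrix.det_mul, Matrix.det_transpose, sq]
    rw [this, hMT, Matrix.det_one]
  · -- other τ give zero
    intro τ hτ
    have hnotall : ¬ ∀ b, τ.1 b ∈ S := by
      intro hall
      exact hτ (Subtype.ext (Finset.orderEmbOfFin_unique hS hall τ.2))
    push_neg at hnotall
    obtain ⟨b, hb⟩ := hnotall
    have hcol : ∀ a, (Q.submatrix σ τ.1) a b = 0 := by
      intro a
      simp only [Matrix.submatrix_apply]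
      apply hπzero
      intro h
      exact hb (h ▸ Finset.mem_image_of_mem _ (Finset.mem_univ a))
    rw [Matrix.det_eq_zero_of_column_eq_zero b hcol]
    ring

lemma card_strictMono_subtype {d j : ℕ} :
    Fintype.card {f : Fin j → Fin d // StrictMono f} = d.choose j := by
  have e : {f : Fin j → Fin d // StrictMono f} ≃ {s : Finset (Fin d) // s.card = j} :=
    { toFun := fun τ => ⟨Finset.image τ.1 Finset.univ, by
        rw [Finset.card_image_of_injective _ τ.2.injective, Finset.card_univ,
          Fintype.card_fin]⟩
      invFun := fun s => ⟨s.1.orderEmbOfFin s.2, (s.1.orderEmbOfFin s.2).strictMono⟩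
      left_inv := fun τ => by
        apply Subtype.ext
        exact (Finset.orderEmbOfFin_unique _
          (fun x => Finset.mem_image_of_mem _ (Finset.mem_univ x)) τ.2).symm
      right_inv := fun s => by
        apply Subtype.ext
        rw [← Finset.coe_inj, Finset.coe_image, Finset.coe_univ, Set.image_univ,
          Finset.range_orderEmbOfFin] }
  rw [Fintype.card_congr e, Fintype.card_finset_len, Fintype.card_fin]

/-- Let `G` be a nonempty finite set of `d × d` signed permutation matrices and `D` any
set of `j`-combinations (strictly increasing tuples). For each `j`-combination `τ` set
`λ_τ := (1/|G|) ∑_{Q ∈ G} ∑_{σ ∈ D} det (Q_{σ,τ})²`. Then the minimum of `λ_τ` over all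
`τ` is at most `|D| / C(d,j)`: some `τ` satisfies `λ_τ ≤ |D| / C(d,j)`. -/
theorem min_frame_eigenvalue_le
    (d j : ℕ) (hd : 1 ≤ d) (hj : 1 ≤ j) (hjd : j ≤ d)
    (G : Finset (Matrix (Fin d) (Fin d) ℝ)) (hG0 : G.Nonempty)
    (hG1 : ∀ Q ∈ G, IsSignedPerm Q)
    (D : Finset {f : Fin j → Fin d // StrictMono f}) :
    ∃ τ : {f : Fin j → Fin d // StrictMono f},
      (1 / (G.card : ℝ)) * ∑ Q ∈ G, ∑ σ ∈ D, ((Q.submatrix σ.1 τ.1).det) ^ 2 ≤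
        (D.card : ℝ) / (d.choose j : ℝ) := by
  set N : ℕ := d.choose j with hN
  have hNpos : 0 < N := Nat.choose_pos hjd
  have hGpos : (0 : ℝ) < (G.card : ℝ) := by
    exact_mod_cast Finset.card_pos.mpr hG0
  -- total sum over all τ equals |D|
  have htotal : ∑ τ : {f : Fin j → Fin d // StrictMono f},
      (1 / (G.card : ℝ)) * ∑ Q ∈ G, ∑ σ ∈ D, ((Q.submatrix σ.1 τ.1).det) ^ 2
      = (D.card : ℝ) := by
    rw [← Finset.mul_sum]
    have : ∑ τ : {f : Fin j → Fin d // StrictMono f},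
        ∑ Q ∈ G, ∑ σ ∈ D, ((Q.submatrix σ.1 τ.1).det) ^ 2
        = ∑ Q ∈ G, ∑ σ ∈ D, ∑ τ : {f : Fin j → Fin d // StrictMono f},
            ((Q.submatrix σ.1 τ.1).det) ^ 2 := by
      rw [Finset.sum_comm]
      apply Finset.sum_congr rfl
      intro Q _
      rw [Finset.sum_comm]
    rw [this]
    have h1 : ∀ Q ∈ G, ∑ σ ∈ D, ∑ τ : {f : Fin j → Fin d // StrictMono f},
        ((Q.submatrix σ.1 τ.1).det) ^ 2 = (D.card : ℝ) := by
      intro Q hQ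
      rw [Finset.sum_congr rfl (fun σ _ => sum_det_sq_eq_one (hG1 Q hQ) σ.1 σ.2)]
      simp
    rw [Finset.sum_congr rfl h1, Finset.sum_const, nsmul_eq_mul]
    field_simp
  by_contra hcon
  push_neg at hcon
  have hcard : (Finset.univ : Finset {f : Fin j → Fin d // StrictMono f}).card = N := by
    rw [Finset.card_univ, card_strictMono_subtype]
  have hne : (Finset.univ : Finset {f : Fin j → Fin d // StrictMono f}).Nonempty := by
    rw [← Finset.card_pos, hcard]; exact hNpos
  have hlt : ∑ τ : {f : Fin j → Fin d // StrictMono f}, ((D.card : ℝ) / (N : ℝ))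
      < ∑ τ : {f : Fin j → Fin d // StrictMono f},
        (1 / (G.card : ℝ)) * ∑ Q ∈ G, ∑ σ ∈ D, ((Q.submatrix σ.1 τ.1).det) ^ 2 :=
    Finset.sum_lt_sum_of_nonempty hne (fun τ _ => hcon τ)
  rw [htotal, Finset.sum_const, hcard, nsmul_eq_mul] at hlt
  have hNR : (0 : ℝ) < (N : ℝ) := by exact_mod_cast hNpos
  rw [mul_div_cancel₀ _ (ne_of_gt hNR)] at hlt
  exact lt_irrefl _ hlt
end

section
/- Let (Ω, P) be a probability space, let L ≥ 1 and M ≥ 1 be integers, let ε, δ ∈ (0,1), and for each j ∈ {1,…,L} let B_j > 0 and let X^j_1, …, X^j_M be independent, identically distributed real random variables satisfying |X^j_i| ≤ B_j almost surely and E[(X^j_i)²] ≤ B_j. If M ≥ (1 + ε/3) · (2 · log(2L/δ) / ε²) · max_{1≤j≤L} B_j, then with probability at least 1 − δ, simultaneously for all j ∈ {1,…,L}: | (1/M) Σ_{i=1}^M X^j_i − E[X^j_1] | ≤ ε. -/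
open MeasureTheory ProbabilityTheory

lemma exp_quad_bound {x a : ℝ} (hx : |x| ≤ a) (ha : a ≤ 3/4) :
    Real.exp x ≤ 1 + x + x ^ 2 * (3 / (2 * (3 - a))) := by
  have ha0 : 0 ≤ a := le_trans (abs_nonneg x) hx
  have hx1 : |x| ≤ 1 := hx.trans (by linarith)
  have h := Real.exp_bound hx1 (n := 4) (by norm_num)
  rw [Finset.sum_range_succ, Finset.sum_range_succ, Finset.sum_range_succ,
    Finset.sum_range_succ, Finset.sum_range_zero] at h
  norm_num [Nat.factorial] at h
  have habs := (abs_le.mp h).2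
  have hxa := abs_le.mp hx
  have h3 : x ^ 3 ≤ x ^ 2 * a := by nlinarith [sq_nonneg x, abs_nonneg x]
  have h4 : |x| ^ 4 ≤ x ^ 2 * a ^ 2 := by nlinarith [sq_nonneg x, abs_nonneg x, sq_abs x]
  have hden : (0:ℝ) < 2 * (3 - a) := by linarith
  have hkey : x ^ 2 / 2 + x ^ 3 / 6 + |x| ^ 4 * 5 / 96 ≤ x ^ 2 * (3 / (2 * (3 - a))) := by
    rw [show x ^ 2 * (3 / (2 * (3 - a))) = x ^ 2 * 3 / (2 * (3 - a)) by ring, le_div_iff₀ hden]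
    nlinarith [mul_le_mul_of_nonneg_right h3 hden.le, mul_le_mul_of_nonneg_right h4 hden.le,
      sq_nonneg (x*a), mul_nonneg (sq_nonneg (x*a)) ha0]
  linarith

lemma integrable_of_abs_le {Ω : Type*} [MeasurableSpace Ω] {P : Measure Ω}
    [IsProbabilityMeasure P] {f : Ω → ℝ} {C : ℝ} (hf : Measurable f)
    (h : ∀ᵐ ω ∂P, |f ω| ≤ C) : Integrable f P :=
  Integrable.mono' (integrable_const C) hf.aestronglyMeasurable
    (by filter_upwards [h] with ω hω using by rwa [Real.norm_eq_abs])

lemma bernstein_upper {Ω : Type*} [MeasurableSpace Ω] (P : Measure Ω) [IsProbabilityMeasure P]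
    {M : ℕ} (hM : 1 ≤ M) {ε Bj : ℝ} (hε0 : 0 < ε) (hε1 : ε < 1) (hBj : 0 < Bj)
    (Y : Fin M → Ω → ℝ) (hmeas : ∀ i, Measurable (Y i))
    (hindep : iIndepFun Y P)
    (hident : ∀ i, IdentDistrib (Y i) (Y ⟨0, hM⟩) P P)
    (hbound : ∀ i, ∀ᵐ ω ∂P, |Y i ω| ≤ Bj)
    (hmom : ∀ i, ∫ ω, (Y i ω) ^ 2 ∂P ≤ Bj) :
    (P {ω | (M:ℝ) * ε + (M:ℝ) * (∫ ω', Y ⟨0, hM⟩ ω' ∂P) ≤ (∑ i, Y i) ω}).toReal ≤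
      Real.exp (-((M:ℝ) * ε ^ 2 * 3) / (2 * Bj * (3 + ε))) := by
  set μ0 : ℝ := ∫ ω', Y ⟨0, hM⟩ ω' ∂P with hμ0
  have h3ε : (0:ℝ) < 3 + ε := by linarith
  set t : ℝ := 3 * ε / ((3 + ε) * Bj) with htdef
  have ht : 0 < t := by positivity
  set a : ℝ := 3 * ε / (3 + ε) with hadef
  have ha : t * Bj = a := by rw [htdef, hadef]; field_simp
  have ha0 : 0 < a := by positivity
  have ha34 : a ≤ 3 / 4 := by
    rw [hadef, div_le_div_iff₀ h3ε (by norm_num)]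
    linarith
  set c : ℝ := 3 / (2 * (3 - a)) with hcdef
  have hc0 : 0 < c := by
    have h3 : (0:ℝ) < 2 * (3 - a) := by linarith
    exact div_pos (by norm_num) h3
  -- integrability
  have hYint : ∀ i, Integrable (Y i) P := fun i => integrable_of_abs_le (hmeas i) (hbound i)
  have hY2int : ∀ i, Integrable (fun ω => (Y i ω) ^ 2) P := fun i => by
    refine integrable_of_abs_le (C := Bj ^ 2) ((hmeas i).pow_const 2) ?_
    filter_upwards [hbound i] with ω hω
    rw [abs_pow]
    exact pow_le_pow_left₀ (abs_nonneg _) hω 2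
  have hint : ∀ i, Integrable (fun ω => Real.exp (t * Y i ω)) P := fun i => by
    refine integrable_of_abs_le (C := Real.exp (t * Bj)) ((hmeas i).const_mul t).exp ?_
    filter_upwards [hbound i] with ω hω
    rw [Real.abs_exp]
    exact Real.exp_le_exp.mpr (mul_le_mul_of_nonneg_left ((le_abs_self _).trans hω) ht.le)
  have hmean : ∀ i, ∫ ω, Y i ω ∂P = μ0 := fun i => (hident i).integral_eq
  -- mgf bound for single variable
  have hmgf : ∀ i, mgf (Y i) P t ≤ Real.exp (t * μ0 + c * (t ^ 2 * Bj)) := by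
    intro i
    have hpt : ∀ᵐ ω ∂P, Real.exp (t * Y i ω) ≤ 1 + t * Y i ω + (c * t ^ 2) * (Y i ω) ^ 2 := by
      filter_upwards [hbound i] with ω hω
      have habs : |t * Y i ω| ≤ a := by
        rw [abs_mul, abs_of_pos ht, ← ha]
        exact mul_le_mul_of_nonneg_left hω ht.le
      have := exp_quad_bound habs ha34
      calc Real.exp (t * Y i ω) ≤ 1 + t * Y i ω + (t * Y i ω) ^ 2 * c := this
        _ = 1 + t * Y i ω + (c * t ^ 2) * (Y i ω) ^ 2 := by ring
    have hrhsint : Integrable (fun ω => 1 + t * Y i ω + (c * t ^ 2) * (Y i ω) ^ 2) P :=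
      ((integrable_const 1).add ((hYint i).const_mul t)).add ((hY2int i).const_mul _)
    calc mgf (Y i) P t = ∫ ω, Real.exp (t * Y i ω) ∂P := rfl
      _ ≤ ∫ ω, (1 + t * Y i ω + (c * t ^ 2) * (Y i ω) ^ 2) ∂P :=
          integral_mono_ae (hint i) hrhsint hpt
      _ = 1 + t * μ0 + (c * t ^ 2) * ∫ ω, (Y i ω) ^ 2 ∂P := by
          have hi0 : Integrable (fun _ : Ω => (1:ℝ)) P := integrable_const 1
          have hi1' : Integrable (fun ω => t * Y i ω) P := (hYint i).const_mul t
          have hi1 : Integrable (fun ω => 1 + t * Y i ω) P := hi0.add hi1'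
          have hi2 : Integrable (fun ω => (c * t ^ 2) * (Y i ω) ^ 2) P := (hY2int i).const_mul _
          rw [integral_add hi1 hi2, integral_add hi0 hi1', integral_const,
            integral_const_mul, integral_const_mul, hmean i]
          simp
      _ ≤ 1 + t * μ0 + (c * t ^ 2) * Bj := by
          have := hmom i
          nlinarith [mul_le_mul_of_nonneg_left (hmom i) (by positivity : (0:ℝ) ≤ c * t ^ 2)]
      _ ≤ Real.exp (t * μ0 + c * (t ^ 2 * Bj)) := by
          have := Real.add_one_le_exp (t * μ0 + c * (t ^ 2 * Bj))
          linarith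
  -- sum
  have hSint : Integrable (fun ω => Real.exp (t * (∑ i, Y i) ω)) P :=
    hindep.integrable_exp_mul_sum hmeas (fun i _ => hint i)
  have hch := measure_ge_le_exp_mul_mgf (μ := P) (X := ∑ i, Y i)
    ((M:ℝ) * ε + (M:ℝ) * μ0) ht.le hSint
  refine hch.trans ?_
  have hSmgf : mgf (∑ i, Y i) P t = ∏ i, mgf (Y i) P t := hindep.mgf_sum hmeas Finset.univ
  have hprod : ∏ i, mgf (Y i) P t ≤ Real.exp (t * μ0 + c * (t ^ 2 * Bj)) ^ M := by
    calc ∏ i, mgf (Y i) P t ≤ ∏ _i : Fin M, Real.exp (t * μ0 + c * (t ^ 2 * Bj)) :=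
        Finset.prod_le_prod (fun i _ => mgf_nonneg) (fun i _ => hmgf i)
      _ = Real.exp (t * μ0 + c * (t ^ 2 * Bj)) ^ M := by
        rw [Finset.prod_const, Finset.card_univ, Fintype.card_fin]
  have hkey : c * (t ^ 2 * Bj) = t * ε / 2 := by
    rw [hcdef, hadef, htdef]
    have hBj' : Bj ≠ 0 := hBj.ne'
    have h3ε' : (3:ℝ) + ε ≠ 0 := h3ε.ne'
    have : (3:ℝ) - 3 * ε / (3 + ε) = 9 / (3 + ε) := by field_simp; ring
    rw [this]
    field_simp
    ring
  calc Real.exp (-t * ((M:ℝ) * ε + (M:ℝ) * μ0)) * mgf (∑ i, Y i) P t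
      ≤ Real.exp (-t * ((M:ℝ) * ε + (M:ℝ) * μ0)) *
        Real.exp (t * μ0 + c * (t ^ 2 * Bj)) ^ M := by
        rw [hSmgf]
        exact mul_le_mul_of_nonneg_left hprod (Real.exp_pos _).le
    _ = Real.exp (-t * ((M:ℝ) * ε + (M:ℝ) * μ0) + (M:ℝ) * (t * μ0 + c * (t ^ 2 * Bj))) := by
        rw [← Real.exp_nat_mul, ← Real.exp_add]
    _ = Real.exp (-((M:ℝ) * ε ^ 2 * 3) / (2 * Bj * (3 + ε))) := by
        congr 1
        rw [hkey, htdef]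
        field_simp
        ring

/-- Bernstein-type guarantee for simultaneous sample-mean estimation: if for each
`j ∈ {1,…,L}` the random variables `X j 1, …, X j M` are i.i.d., bounded by `B j` and with
second moment at most `B j`, and `M ≥ (1 + ε/3) · (2 log(2L/δ)/ε²) · max_j B j`, then with
probability at least `1 - δ` all `L` sample means are within `ε` of their expectations. -/
theorem sample_mean_simultaneous_estimation
    {Ω : Type*} [MeasurableSpace Ω] (P : Measure Ω) [IsProbabilityMeasure P]
    (L M : ℕ) (hL : 1 ≤ L) (hM : 1 ≤ M)
    (ε δ : ℝ) (hε : ε ∈ Set.Ioo (0:ℝ) 1) (hδ : δ ∈ Set.Ioo (0:ℝ) 1)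
    (B : Fin L → ℝ) (hB : ∀ j, 0 < B j)
    (X : Fin L → Fin M → Ω → ℝ)
    (hmeas : ∀ j i, Measurable (X j i))
    (hindep : ∀ j, iIndepFun (X j) P)
    (hident : ∀ j i i', IdentDistrib (X j i) (X j i') P P)
    (hbound : ∀ j i, ∀ᵐ ω ∂P, |X j i ω| ≤ B j)
    (hmom : ∀ j i, ∫ ω, (X j i ω) ^ 2 ∂P ≤ B j)
    (hMbig : (1 + ε/3) * (2 * Real.log (2 * (L:ℝ) / δ) / ε ^ 2) *
        (Finset.univ.sup' (Finset.univ_nonempty_iff.mpr ⟨⟨0, hL⟩⟩) B) ≤ (M:ℝ)) :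
    ENNReal.ofReal (1 - δ) ≤
      P {ω | ∀ j, |(1 / (M:ℝ)) * ∑ i, X j i ω - ∫ ω', X j ⟨0, hM⟩ ω' ∂P| ≤ ε} := by
  obtain ⟨hε0, hε1⟩ := hε
  obtain ⟨hδ0, hδ1⟩ := hδ
  have hM0 : (0:ℝ) < M := by exact_mod_cast hM
  have hL0 : (0:ℝ) < L := by exact_mod_cast hL
  set K := Real.log (2 * (L:ℝ) / δ) with hKdef
  have h2L : (0:ℝ) < 2 * (L:ℝ) / δ := by positivity
  have hL1 : (1:ℝ) ≤ (L:ℝ) := by exact_mod_cast hL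
  have hK0 : 0 < K := Real.log_pos ((one_lt_div hδ0).mpr (by linarith))
  have hexpK : Real.exp (-K) = δ / (2 * (L:ℝ)) := by
    rw [hKdef, Real.exp_neg, Real.exp_log h2L, inv_div]
  have hBmax : ∀ j, B j ≤ Finset.univ.sup' (Finset.univ_nonempty_iff.mpr ⟨⟨0, hL⟩⟩) B :=
    fun j => Finset.le_sup' B (Finset.mem_univ j)
  -- tail comparison
  have hexp_le : ∀ j, Real.exp (-((M:ℝ) * ε ^ 2 * 3) / (2 * B j * (3 + ε))) ≤ δ / (2 * (L:ℝ)) := by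
    intro j
    rw [← hexpK]
    apply Real.exp_le_exp.mpr
    rw [neg_div, neg_le_neg_iff]
    have h1 : (1 + ε/3) * (2 * K / ε ^ 2) * B j ≤ (M:ℝ) :=
      le_trans (mul_le_mul_of_nonneg_left (hBmax j) (by positivity)) hMbig
    have h3 : (1 + ε/3) * (2 * K) * B j ≤ (M:ℝ) * ε ^ 2 := by
      calc (1 + ε/3) * (2 * K) * B j = ((1 + ε/3) * (2 * K / ε ^ 2) * B j) * ε ^ 2 := by
            field_simp
        _ ≤ (M:ℝ) * ε ^ 2 := mul_le_mul_of_nonneg_right h1 (sq_nonneg ε)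
    rw [le_div_iff₀ (by nlinarith [hB j] : (0:ℝ) < 2 * B j * (3 + ε))]
    nlinarith [h3]
  -- events
  set Aset : Fin L → Set Ω := fun j =>
    {ω | (M:ℝ) * ε + (M:ℝ) * (∫ ω', X j ⟨0, hM⟩ ω' ∂P) ≤ (∑ i, X j i) ω} with hAdef
  set Cset : Fin L → Set Ω := fun j =>
    {ω | (M:ℝ) * ε + (M:ℝ) * (∫ ω', -X j ⟨0, hM⟩ ω' ∂P) ≤
      (∑ i : Fin M, fun ω'' => -X j i ω'') ω} with hCdef
  have hA : ∀ j, (P (Aset j)).toReal ≤ Real.exp (-((M:ℝ) * ε ^ 2 * 3) / (2 * B j * (3 + ε))) :=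
    fun j => bernstein_upper P hM hε0 hε1 (hB j) (X j) (hmeas j) (hindep j)
      (fun i => hident j i ⟨0, hM⟩) (hbound j) (hmom j)
  have hC : ∀ j, (P (Cset j)).toReal ≤ Real.exp (-((M:ℝ) * ε ^ 2 * 3) / (2 * B j * (3 + ε))) := by
    intro j
    exact bernstein_upper P hM hε0 hε1 (hB j) (fun i ω => -X j i ω)
      (fun i => (hmeas j i).neg)
      ((hindep j).comp (fun _ => fun x : ℝ => -x) (fun _ => measurable_neg))
      (fun i => (hident j i ⟨0, hM⟩).comp measurable_neg)
      (fun i => by filter_upwards [hbound j i] with ω h using by rwa [abs_neg])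
      (fun i => by simpa using hmom j i)
  have hhalf : (0:ℝ) ≤ δ / (2 * (L:ℝ)) := by positivity
  have hAEn : ∀ j, P (Aset j) ≤ ENNReal.ofReal (δ / (2 * (L:ℝ))) := fun j => by
    rw [← ENNReal.ofReal_toReal (measure_ne_top P _)]
    exact ENNReal.ofReal_le_ofReal ((hA j).trans (hexp_le j))
  have hCEn : ∀ j, P (Cset j) ≤ ENNReal.ofReal (δ / (2 * (L:ℝ))) := fun j => by
    rw [← ENNReal.ofReal_toReal (measure_ne_top P _)]
    exact ENNReal.ofReal_le_ofReal ((hC j).trans (hexp_le j))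
  have hbad : ∀ j, P (Aset j ∪ Cset j) ≤ ENNReal.ofReal (δ / (L:ℝ)) := fun j => by
    refine (measure_union_le _ _).trans ?_
    refine le_trans (add_le_add (hAEn j) (hCEn j)) ?_
    rw [← ENNReal.ofReal_add hhalf hhalf]
    apply ENNReal.ofReal_le_ofReal
    have heq : δ / (2 * (L:ℝ)) + δ / (2 * (L:ℝ)) = δ / (L:ℝ) := by
      field_simp
      ring
    exact le_of_eq heq
  -- good set
  set G : Set Ω :=
    {ω | ∀ j, |(1 / (M:ℝ)) * ∑ i, X j i ω - ∫ ω', X j ⟨0, hM⟩ ω' ∂P| ≤ ε} with hGdef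
  have hGmeas : MeasurableSet G := by
    have hGi : G = ⋂ j, {ω | |(1 / (M:ℝ)) * ∑ i, X j i ω - ∫ ω', X j ⟨0, hM⟩ ω' ∂P| ≤ ε} := by
      ext ω; simp [hGdef, Set.mem_iInter]
    rw [hGi]
    refine MeasurableSet.iInter fun j => ?_
    have hm : Measurable fun ω => |(1 / (M:ℝ)) * ∑ i, X j i ω - ∫ ω', X j ⟨0, hM⟩ ω' ∂P| :=
      (((Finset.measurable_sum Finset.univ (fun i _ => hmeas j i)).const_mul _).sub
        measurable_const).abs
    exact measurableSet_le hm measurable_const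
  -- complement is covered by the bad events
  have hsub : Gᶜ ⊆ ⋃ j, (Aset j ∪ Cset j) := by
    intro ω hω
    have hω' : ¬ ∀ j, |(1 / (M:ℝ)) * ∑ i, X j i ω - ∫ ω', X j ⟨0, hM⟩ ω' ∂P| ≤ ε := hω
    push_neg at hω'
    obtain ⟨j, hj⟩ := hω'
    refine Set.mem_iUnion.mpr ⟨j, ?_⟩
    set S : ℝ := ∑ i, X j i ω with hSdef
    set m : ℝ := ∫ ω', X j ⟨0, hM⟩ ω' ∂P with hmdef
    have hMS : (M:ℝ) * ((1 / (M:ℝ)) * S) = S := by field_simp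
    rcases lt_abs.mp hj with h | h
    · left
      show (M:ℝ) * ε + (M:ℝ) * m ≤ (∑ i, X j i) ω
      rw [Finset.sum_apply, ← hSdef]
      nlinarith [mul_lt_mul_of_pos_left h hM0, hMS]
    · right
      show (M:ℝ) * ε + (M:ℝ) * (∫ ω', -X j ⟨0, hM⟩ ω' ∂P) ≤
        (∑ i : Fin M, fun ω'' => -X j i ω'') ω
      have hsum : (∑ i : Fin M, fun ω'' => -X j i ω'') ω = -S := by
        rw [Finset.sum_apply, hSdef, ← Finset.sum_neg_distrib]
      rw [hsum, integral_neg, ← hmdef]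
      nlinarith [mul_lt_mul_of_pos_left h hM0, hMS]
  -- union bound
  have hUB : P Gᶜ ≤ ENNReal.ofReal δ := by
    calc P Gᶜ ≤ P (⋃ j, (Aset j ∪ Cset j)) := measure_mono hsub
      _ ≤ ∑' j, P (Aset j ∪ Cset j) := measure_iUnion_le _
      _ = ∑ j, P (Aset j ∪ Cset j) := tsum_fintype _
      _ ≤ ∑ _j : Fin L, ENNReal.ofReal (δ / (L:ℝ)) := Finset.sum_le_sum (fun j _ => hbad j)
      _ = (L : ENNReal) * ENNReal.ofReal (δ / (L:ℝ)) := by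
          rw [Finset.sum_const, Finset.card_univ, Fintype.card_fin, nsmul_eq_mul]
      _ = ENNReal.ofReal δ := by
          rw [← ENNReal.ofReal_natCast L, ← ENNReal.ofReal_mul (by positivity)]
          congr 1
          field_simp
  have htot : P G + P Gᶜ = 1 := by rw [measure_add_measure_compl hGmeas, measure_univ]
  have hG1 : P G = 1 - P Gᶜ := ENNReal.eq_sub_of_add_eq (measure_ne_top P _) htot
  rw [hG1]
  calc ENNReal.ofReal (1 - δ) = ENNReal.ofReal 1 - ENNReal.ofReal δ :=
      ENNReal.ofReal_sub 1 hδ0.le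
    _ = 1 - ENNReal.ofReal δ := by rw [ENNReal.ofReal_one]
    _ ≤ 1 - P Gᶜ := tsub_le_tsub_left hUB 1
end

section
/- Let H be a finite group, V a finite-dimensional complex inner product space, and φ : H → U(V) a unitary representation that is irreducible (the only subspaces W ⊆ V with φ(g)W ⊆ W for all g ∈ H are {0} and V). Let v ∈ V be nonzero and let O_v = { φ(g)v : g ∈ H } be its orbit, a finite subset of V. Then for all x ∈ V: Σ_{w ∈ O_v} ⟨w, x⟩ · w = (|O_v| / dim V) · ‖v‖² · x. -/
open Classical

/-- Frame operator of the orbit of a nonzero vector under an irreducible unitary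
representation `φ` of a finite group `H` on a finite-dimensional complex inner ℂ product
space `V`: for every `x ∈ V`,
`∑_{w ∈ O_v} ⟨w, x⟩ • w = (|O_v| / dim V) ‖v‖² • x`,
where `O_v = {φ(g) v : g ∈ H}` is the orbit (as a set of distinct vectors). -/
theorem frame_operator_of_irreducible_orbit
    {H V : Type*} [Group H] [Fintype H]
    [NormedAddCommGroup V] [InnerProductSpace ℂ V] [FiniteDimensional ℂ V]
    (φ : H →* (V →ₗ[ℂ] V))
    (hunit : ∀ (g : H) (x y : V), (inner ℂ (φ g x) (φ g y) : ℂ) = inner ℂ x y)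
    (hirr : ∀ W : Submodule ℂ V, (∀ g : H, ∀ w ∈ W, φ g w ∈ W) → W = ⊥ ∨ W = ⊤)
    (v : V) (hv : v ≠ 0) (x : V) :
    ∑ w ∈ Finset.univ.image (fun g : H => φ g v), (inner ℂ w x : ℂ) • w =
      ((((Finset.univ.image (fun g : H => φ g v)).card : ℂ) / (Module.finrank ℂ V : ℂ)) *
        ((‖v‖ : ℂ)) ^ 2) • x := by
  classical
  set O : Finset V := Finset.univ.image (fun g : H => φ g v) with hO
  let T : V →ₗ[ℂ] V :=
    { toFun := fun y => ∑ w ∈ O, (inner ℂ w y : ℂ) • w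
      map_add' := by
        intro a b
        simp [inner_add_right, add_smul, Finset.sum_add_distrib]
      map_smul' := by
        intro c a
        simp [inner_smul_right, smul_smul, Finset.smul_sum] }
  have hT : ∀ y, T y = ∑ w ∈ O, (inner ℂ w y : ℂ) • w := fun y => rfl
  have hmem : ∀ g : H, ∀ w ∈ O, φ g w ∈ O := by
    intro g w hw
    simp only [hO, Finset.mem_image, Finset.mem_univ, true_and] at hw ⊢
    obtain ⟨h, rfl⟩ := hw
    exact ⟨g * h, by rw [map_mul]; rfl⟩
  have hinv : ∀ g : H, ∀ w : V, φ g⁻¹ (φ g w) = w := by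
    intro g w
    have h1 : φ g⁻¹ * φ g = 1 := by rw [← map_mul, inv_mul_cancel, map_one]
    calc φ g⁻¹ (φ g w) = (φ g⁻¹ * φ g) w := rfl
    _ = w := by rw [h1]; rfl
  have hcomm : ∀ (g : H) (y : V), T (φ g y) = φ g (T y) := by
    intro g y
    rw [hT, hT, map_sum]
    refine Finset.sum_nbij' (fun w => φ g⁻¹ w) (fun w => φ g w)
      (fun w hw => hmem g⁻¹ w hw) (fun w hw => hmem g w hw)
      (fun w _ => by have := hinv g⁻¹ w; simpa using this)
      (fun w _ => hinv g w) ?_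
    intro w hw
    rw [map_smul]
    congr 1
    · calc (inner ℂ w (φ g y) : ℂ) = inner ℂ (φ g⁻¹ w) (φ g⁻¹ (φ g y)) := (hunit g⁻¹ w (φ g y)).symm
      _ = inner ℂ (φ g⁻¹ w) y := by rw [hinv]
    · exact (by have := hinv g⁻¹ w; simpa using this.symm)
  have : Nontrivial V := nontrivial_of_ne v 0 hv
  obtain ⟨c, hc⟩ := Module.End.exists_eigenvalue T
  have heig : Module.End.eigenspace T c = ⊤ := by
    have hW : ∀ g : H, ∀ w ∈ Module.End.eigenspace T c, φ g w ∈ Module.End.eigenspace T c := by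
      intro g w hw
      rw [Module.End.mem_eigenspace_iff] at hw ⊢
      rw [hcomm, hw, map_smul]
    exact (hirr _ hW).resolve_left hc
  have hTc : ∀ y, T y = c • y := fun y =>
    Module.End.mem_eigenspace_iff.mp (heig ▸ Submodule.mem_top)
  -- trace argument with orthonormal basis
  set n := Module.finrank ℂ V with hn
  let b := stdOrthonormalBasis ℂ V
  have hbi : ∀ i, (inner ℂ (b i) (b i) : ℂ) = 1 := by
    intro i
    have := orthonormal_iff_ite.mp b.orthonormal i i
    simpa using this
  have h1 : ∑ i, (inner ℂ (b i) (T (b i)) : ℂ) = c * n := by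
    simp only [hTc, inner_smul_right]
    rw [Finset.sum_congr rfl (fun i _ => by rw [hbi i, mul_one])]
    simp [mul_comm, hn]
  have hnorm : ∀ w ∈ O, (inner ℂ w w : ℂ) = (‖v‖ : ℂ) ^ 2 := by
    intro w hw
    simp only [hO, Finset.mem_image, Finset.mem_univ, true_and] at hw
    obtain ⟨g, rfl⟩ := hw
    rw [hunit, inner_self_eq_norm_sq_to_K]
    norm_cast
  have h2 : ∑ i, (inner ℂ (b i) (T (b i)) : ℂ) = (O.card : ℂ) * (‖v‖ : ℂ) ^ 2 := by
    have step : ∀ i, (inner ℂ (b i) (T (b i)) : ℂ) = ∑ w ∈ O, (inner ℂ w (b i) : ℂ) * inner ℂ (b i) w := by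
      intro i
      rw [hT, inner_sum]
      exact Finset.sum_congr rfl fun w _ => by rw [inner_smul_right]
    calc ∑ i, (inner ℂ (b i) (T (b i)) : ℂ)
        = ∑ i, ∑ w ∈ O, (inner ℂ w (b i) : ℂ) * inner ℂ (b i) w := by
          exact Finset.sum_congr rfl fun i _ => step i
      _ = ∑ w ∈ O, ∑ i, (inner ℂ w (b i) : ℂ) * inner ℂ (b i) w := Finset.sum_comm
      _ = ∑ w ∈ O, (inner ℂ w w : ℂ) := by
          exact Finset.sum_congr rfl fun w _ => b.sum_inner_mul_inner w w
      _ = ∑ w ∈ O, (‖v‖ : ℂ) ^ 2 := Finset.sum_congr rfl hnorm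
      _ = (O.card : ℂ) * (‖v‖ : ℂ) ^ 2 := by rw [Finset.sum_const]; simp [mul_comm]
  have hnne : (n : ℂ) ≠ 0 := Nat.cast_ne_zero.mpr Module.finrank_pos.ne'
  have hceq : c = ((O.card : ℂ) / n) * (‖v‖ : ℂ) ^ 2 := by
    have h3 : c * n = (O.card : ℂ) * (‖v‖ : ℂ) ^ 2 := h1.symm.trans h2
    field_simp
    rw [← h3]
  calc ∑ w ∈ O, (inner ℂ w x : ℂ) • w = T x := (hT x).symm
    _ = c • x := hTc x
    _ = _ := by rw [hceq]
end

section
/- Let H be a finite group, V a finite-dimensional complex inner product space, and φ : H → U(V) a unitary representation. Then the following are equivalent: (1) for every nonzero v ∈ V, the orbit φ(H)v = { φ(g)v : g ∈ H } is a tight frame for V, i.e., there exists α > 0 such that Σ_{w ∈ φ(H)v} |⟨w, x⟩|² = α·‖x‖² for all x ∈ V; (2) for every nonzero v ∈ V, the linear span of the orbit φ(H)v is all of V (i.e., φ is irreducible). -/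
open Classical

/-- For a unitary representation `φ` of a finite group `H` on a finite-dimensional complex
inner product space `V`, the following are equivalent: (1) every orbit `φ(H)v` of a
nonzero vector `v` is a tight frame, i.e. there is `α > 0` with
`∑_{w ∈ φ(H)v} |⟨w, x⟩|² = α ‖x‖²` for all `x`; (2) every orbit of a nonzero vector spans
`V` (i.e. `φ` is irreducible). -/
theorem orbit_tight_frame_iff_orbit_spans
    {H V : Type*} [Group H] [Fintype H]
    [NormedAddCommGroup V] [InnerProductSpace ℂ V] [FiniteDimensional ℂ V]
    (φ : H →* (V →ₗ[ℂ] V))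
    (hunit : ∀ (g : H) (x y : V), (inner ℂ (φ g x) (φ g y) : ℂ) = inner ℂ x y) :
    (∀ v : V, v ≠ 0 → ∃ α : ℝ, 0 < α ∧ ∀ x : V,
        ∑ w ∈ Finset.univ.image (fun g : H => φ g v), ‖(inner ℂ w x : ℂ)‖ ^ 2 = α * ‖x‖ ^ 2)
      ↔
    (∀ v : V, v ≠ 0 → Submodule.span ℂ (Set.range fun g : H => φ g v) = ⊤) := by
  constructor
  · -- tight frame ⇒ spanning
    intro hf v hv
    obtain ⟨α, hα, hframe⟩ := hf v hv
    rw [← Submodule.orthogonal_eq_bot_iff, Submodule.eq_bot_iff]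
    intro x hx
    have hz : ∀ w ∈ Finset.univ.image (fun g : H => φ g v), ‖(inner ℂ w x : ℂ)‖ ^ 2 = 0 := by
      intro w hw
      simp only [Finset.mem_image] at hw
      obtain ⟨g, _, rfl⟩ := hw
      have : (inner ℂ (φ g v) x : ℂ) = 0 := hx _ (Submodule.subset_span ⟨g, rfl⟩)
      simp [this]
    have h0 : α * ‖x‖ ^ 2 = 0 := by
      rw [← hframe x]
      exact Finset.sum_eq_zero hz
    have : ‖x‖ ^ 2 = 0 := (mul_eq_zero.mp h0).resolve_left (ne_of_gt hα)
    simpa using this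
  · -- spanning ⇒ tight frame
    intro hspan v hv
    haveI : Nontrivial V := nontrivial_of_ne v 0 hv
    set T : Finset V := Finset.univ.image (fun g : H => φ g v) with hT
    -- the frame operator
    let S : V →ₗ[ℂ] V :=
      { toFun := fun x => ∑ w ∈ T, (inner ℂ w x : ℂ) • w
        map_add' := by
          intro x y
          simp [inner_add_right, add_smul, Finset.sum_add_distrib]
        map_smul' := by
          intro c x
          simp [inner_smul_right, smul_smul, Finset.smul_sum] }
    have hST : ∀ x : V, S x = ∑ w ∈ T, (inner ℂ w x : ℂ) • w := fun _ => rfl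
    have hmemT : ∀ (g : H) (w : V), w ∈ T → φ g w ∈ T := by
      intro g w hw
      simp only [hT, Finset.mem_image] at hw ⊢
      obtain ⟨h', -, rfl⟩ := hw
      exact ⟨g * h', Finset.mem_univ _, by rw [map_mul]; rfl⟩
    have hinv : ∀ (g : H) (w : V), φ g⁻¹ (φ g w) = w := by
      intro g w
      have : φ g⁻¹ * φ g = 1 := by rw [← map_mul, inv_mul_cancel, map_one]
      calc φ g⁻¹ (φ g w) = (φ g⁻¹ * φ g) w := rfl
        _ = w := by rw [this]; rfl
    have hinv' : ∀ (g : H) (w : V), φ g (φ g⁻¹ w) = w := by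
      intro g w
      have : φ g * φ g⁻¹ = 1 := by rw [← map_mul, mul_inv_cancel, map_one]
      calc φ g (φ g⁻¹ w) = (φ g * φ g⁻¹) w := rfl
        _ = w := by rw [this]; rfl
    -- S commutes with the representation
    have hcomm : ∀ (g : H) (x : V), S (φ g x) = φ g (S x) := by
      intro g x
      rw [hST, hST, map_sum]
      simp only [LinearMap.map_smul]
      refine Finset.sum_nbij' (fun w => φ g⁻¹ w) (fun w => φ g w) ?_ ?_ ?_ ?_ ?_
      · intro w hw; exact hmemT g⁻¹ w hw
      · intro w hw; exact hmemT g w hw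
      · intro w _; exact hinv' g w
      · intro w _; exact hinv g w
      · intro w _
        have h1 : (inner ℂ w (φ g x) : ℂ) = inner ℂ (φ g⁻¹ w) x := by
          have := hunit g (φ g⁻¹ w) x
          rw [hinv'] at this
          exact this
        rw [h1, hinv']
    -- S has an eigenvalue μ, and its eigenspace is invariant, hence S = μ • id
    obtain ⟨μ, hμ⟩ := Module.End.exists_eigenvalue (S : Module.End ℂ V)
    obtain ⟨u, hu⟩ := hμ.exists_hasEigenvector
    have hSu : S u = μ • u := Module.End.mem_eigenspace_iff.mp hu.1
    have hEtop : Module.End.eigenspace (S : Module.End ℂ V) μ = ⊤ := by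
      rw [eq_top_iff, ← hspan u hu.2, Submodule.span_le]
      rintro _ ⟨g, rfl⟩
      rw [SetLike.mem_coe, Module.End.mem_eigenspace_iff]
      show S (φ g u) = μ • φ g u
      rw [hcomm, hSu, LinearMap.map_smul]
    have hSx : ∀ x : V, S x = μ • x := by
      intro x
      exact Module.End.mem_eigenspace_iff.mp (hEtop ▸ Submodule.mem_top : x ∈ _)
    -- key inner product identity
    have hkey : ∀ x : V, ((∑ w ∈ T, ‖(inner ℂ w x : ℂ)‖ ^ 2 : ℝ) : ℂ)
        = μ * ((‖x‖ ^ 2 : ℝ) : ℂ) := by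
      intro x
      have h1 : (inner ℂ x (S x) : ℂ) = ∑ w ∈ T, ‖(inner ℂ w x : ℂ)‖ ^ 2 := by
        rw [hST, inner_sum]
        rw [Complex.ofReal_sum]
        refine Finset.sum_congr rfl fun w _ => ?_
        rw [inner_smul_right, ← inner_conj_symm x w, Complex.mul_conj']
        push_cast
        ring
      have h2 : (inner ℂ x (S x) : ℂ) = μ * ((‖x‖ ^ 2 : ℝ) : ℂ) := by
        rw [hSx, inner_smul_right, inner_self_eq_norm_sq_to_K]
        norm_cast
      rw [← h1, h2]
    -- evaluate at v to see μ is a positive real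
    have hvT : v ∈ T := by
      simp only [hT, Finset.mem_image]
      exact ⟨1, Finset.mem_univ _, by rw [map_one]; rfl⟩
    have hsum_pos : 0 < ∑ w ∈ T, ‖(inner ℂ w v : ℂ)‖ ^ 2 := by
      refine Finset.sum_pos' (fun w _ => by positivity) ⟨v, hvT, ?_⟩
      have h0 : (inner ℂ v v : ℂ) ≠ 0 := inner_self_ne_zero.mpr hv
      exact pow_pos (norm_pos_iff.mpr h0) 2
    have hnv : (0 : ℝ) < ‖v‖ ^ 2 := pow_pos (norm_pos_iff.mpr hv) 2
    have h := hkey v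
    have him : μ.im = 0 := by
      have h2 := congrArg Complex.im h
      rw [Complex.ofReal_im, Complex.mul_im, Complex.ofReal_im, Complex.ofReal_re] at h2
      have h3 : μ.im * ‖v‖ ^ 2 = 0 := by linarith
      exact (mul_eq_zero.mp h3).resolve_right (ne_of_gt hnv)
    have hre : ∑ w ∈ T, ‖(inner ℂ w v : ℂ)‖ ^ 2 = μ.re * ‖v‖ ^ 2 := by
      have h2 := congrArg Complex.re h
      rw [Complex.ofReal_re, Complex.mul_re, Complex.ofReal_im, Complex.ofReal_re, him] at h2
      linarith
    have hμeq : μ = (μ.re : ℂ) := by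
      apply Complex.ext <;> simp [him]
    refine ⟨μ.re, by nlinarith, fun x => ?_⟩
    have hx := hkey x
    rw [hμeq] at hx
    have : ((∑ w ∈ T, ‖(inner ℂ w x : ℂ)‖ ^ 2 : ℝ) : ℂ) = ((μ.re * ‖x‖ ^ 2 : ℝ) : ℂ) := by
      rw [hx]; push_cast; ring
    exact_mod_cast this
end

section
/- Let k ≥ 1 and n ≥ 2k be integers, and let ℓ be an integer with 2k ≤ ℓ ≤ n. Then the number of 2k-element subsets T of {0,…,n−1} with loc(T) = ℓ equals binom(ℓ−k−1, k−1) · binom(n+k−ℓ, k). -/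
open Classical


private lemma sum_range_double (m : ℕ) (f : ℕ → ℕ) :
    ∑ i ∈ Finset.range (2*m), f i = ∑ i ∈ Finset.range m, (f (2*i) + f (2*i+1)) := by
  induction m with
  | zero => simp
  | succ p ih =>
    have h2 : 2*(p+1) = (2*p)+1+1 := by ring
    rw [h2, Finset.sum_range_succ, Finset.sum_range_succ, ih, Finset.sum_range_succ]
    ring

private lemma adt_card_succ (k n : ℕ) :
    (Finset.Nat.antidiagonalTuple (k+1) n).card
      = ∑ p ∈ Finset.HasAntidiagonal.antidiagonal n, (Finset.Nat.antidiagonalTuple k p.2).card := by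
  have he : Finset.Nat.antidiagonalTuple (k+1) n
      = (Finset.HasAntidiagonal.antidiagonal n).biUnion
          (fun p => (Finset.Nat.antidiagonalTuple k p.2).map
            ⟨Fin.cons p.1, Fin.cons_right_injective (α := fun _ => ℕ) p.1⟩) := by
    ext x
    simp only [Finset.Nat.mem_antidiagonalTuple, Finset.mem_biUnion, Finset.mem_map,
      Function.Embedding.coeFn_mk, Finset.HasAntidiagonal.mem_antidiagonal, Prod.exists]
    constructor
    · intro hx
      exact ⟨x 0, ∑ i, Fin.tail x i, by rw [← hx, Fin.sum_univ_succ]; rfl, Fin.tail x,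
        rfl, Fin.cons_self_tail x⟩
    · rintro ⟨a, b, hab, y, hy, rfl⟩
      rw [Fin.sum_cons, hy, hab]
  rw [he, Finset.card_biUnion]
  · exact Finset.sum_congr rfl fun p _ => Finset.card_map _
  · intro p hp q hq hpq
    rw [Function.onFun, Finset.disjoint_left]
    rintro x hx1 hx2
    simp only [Finset.mem_map, Function.Embedding.coeFn_mk] at hx1 hx2
    obtain ⟨y, hy, rfl⟩ := hx1
    obtain ⟨z, hz, hzx⟩ := hx2
    apply hpq
    have h0 : p.1 = q.1 := by
      have := congrFun hzx 0
      simpa using this.symm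
    rw [Finset.mem_coe, Finset.HasAntidiagonal.mem_antidiagonal] at hp hq
    exact Prod.ext h0 (by omega)

private lemma adt_card : ∀ k n : ℕ, (Finset.Nat.antidiagonalTuple k n).card = (n + k - 1).choose n := by
  intro k
  induction k with
  | zero =>
    intro n
    cases n with
    | zero => simp
    | succ m =>
      rw [Finset.Nat.antidiagonalTuple_zero_succ, Finset.card_empty]
      have h : m + 1 + 0 - 1 = m := by omega
      rw [h]
      exact (Nat.choose_eq_zero_of_lt (Nat.lt_succ_self m)).symm
  | succ k ih =>
    intro n
    rw [adt_card_succ, Finset.Nat.sum_antidiagonal_eq_sum_range_succ_mk]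
    have step1 : ∑ i ∈ Finset.range (n+1), (Finset.Nat.antidiagonalTuple k (n - i)).card
        = ∑ j ∈ Finset.range (n+1), (j + k - 1).choose j := by
      have hre := Finset.sum_range_reflect (fun j => (j + k - 1).choose j) (n+1)
      simp only [Nat.add_sub_cancel] at hre
      rw [← hre]
      exact Finset.sum_congr rfl fun i _ => ih _
    rw [step1]
    -- now ∑ j ∈ range (n+1), (j+k-1).choose j = (n + (k+1) - 1).choose n
    have hgoal : n + (k+1) - 1 = n + k := by omega
    rw [hgoal]
    cases k with
    | zero =>
      rw [Finset.sum_eq_single_of_mem 0 (Finset.mem_range.mpr (Nat.succ_pos n))]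
      · simp
      · intro b _ hb
        exact Nat.choose_eq_zero_of_lt (by omega)
    | succ m =>
      have step2 : ∀ j, (j + (m+1) - 1).choose j = (j + m).choose m := by
        intro j
        have h1 : j + (m+1) - 1 = j + m := by omega
        rw [h1]
        have h2 := Nat.choose_symm (show m ≤ j + m by omega)
        rw [Nat.add_sub_cancel] at h2
        exact h2
      simp only [step2]
      have step3 : ∑ j ∈ Finset.range (n+1), (j + m).choose m
          = ∑ x ∈ Finset.Icc m (n + m), x.choose m := by
        have h4 := Finset.sum_Ico_eq_sum_range (f := fun x => x.choose m) (m := m) (n := n + m + 1)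
        have h5 : n + m + 1 - m = n + 1 := by omega
        rw [h5] at h4
        rw [← Finset.Ico_add_one_right_eq_Icc, h4]
        exact Finset.sum_congr rfl fun j _ => by rw [Nat.add_comm m j]
      rw [step3, Nat.sum_Icc_choose]
      have h6 := Nat.choose_symm (show m + 1 ≤ n + (m+1) by omega)
      rw [Nat.add_sub_cancel] at h6
      have h7 : n + m + 1 = n + (m + 1) := by omega
      rw [h7, h6]

private def pf {k : ℕ} (f : Fin k → ℕ) (m : ℕ) : ℕ := if h : m < k then f ⟨m, h⟩ else 0

private def psum {k : ℕ} (f : Fin k → ℕ) (j : ℕ) : ℕ := ∑ m ∈ Finset.range j, pf f m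

private lemma psum_mono {k : ℕ} (f : Fin k → ℕ) : Monotone (psum f) := fun _ _ hab =>
  Finset.sum_le_sum_of_subset (Finset.range_subset_range.mpr hab)

private lemma psum_succ {k : ℕ} (f : Fin k → ℕ) (j : ℕ) :
    psum f (j+1) = psum f j + pf f j := Finset.sum_range_succ _ _

private lemma psum_total {k : ℕ} (f : Fin k → ℕ) : psum f k = ∑ i : Fin k, f i := by
  rw [psum, ← Fin.sum_univ_eq_sum_range (pf f) k]
  exact Finset.sum_congr rfl fun i _ => by simp [pf, i.isLt]

private lemma psum_le {k : ℕ} (f : Fin k → ℕ) (j : ℕ) : psum f j ≤ ∑ i : Fin k, f i := by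
  rcases le_or_gt j k with h | h
  · rw [← psum_total]; exact psum_mono f h
  · have he : psum f j = psum f k := by
      rw [psum, psum]
      refine (Finset.sum_subset (Finset.range_subset_range.mpr h.le) ?_).symm
      intro x _ hx
      rw [Finset.mem_range, not_lt] at hx
      rw [pf, dif_neg (by omega)]
    rw [he, psum_total]

private def tval {k : ℕ} (d : Fin k → ℕ) (s : Fin (k+1) → ℕ) (j : ℕ) : ℕ :=
  j + psum s (j/2 + 1) + psum d ((j+1)/2)

private lemma tval_zero {k : ℕ} (d : Fin k → ℕ) (s : Fin (k+1) → ℕ) :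
    tval d s 0 = s ⟨0, Nat.succ_pos k⟩ := by
  rw [tval]
  have h1 : (0:ℕ)/2 + 1 = 1 := by omega
  have h2 : (0+1)/2 = 0 := by omega
  rw [h1, h2, psum, psum, Finset.sum_range_one, Finset.sum_range_zero, pf,
    dif_pos (Nat.succ_pos k)]
  omega

private lemma tval_odd {k : ℕ} (d : Fin k → ℕ) (s : Fin (k+1) → ℕ) (i : ℕ) (hi : i < k) :
    tval d s (2*i+1) = tval d s (2*i) + d ⟨i, hi⟩ + 1 := by
  have h1 : (2*i+1)/2 + 1 = i + 1 := by omega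
  have h2 : (2*i)/2 + 1 = i + 1 := by omega
  have h3 : (2*i+1+1)/2 = i+1 := by omega
  have h4 : (2*i+1)/2 = i := by omega
  rw [tval, tval, h1, h2, h3, h4, psum_succ d i, pf, dif_pos hi]
  ring

private lemma tval_even {k : ℕ} (d : Fin k → ℕ) (s : Fin (k+1) → ℕ) (i : ℕ) (hi : i + 1 < k + 1) :
    tval d s (2*i+2) = tval d s (2*i+1) + s ⟨i+1, hi⟩ + 1 := by
  have h1 : (2*i+2)/2 + 1 = (i+1) + 1 := by omega
  have h2 : (2*i+1)/2 + 1 = i + 1 := by omega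
  have h3 : (2*i+2+1)/2 = i+1 := by omega
  have h4 : (2*i+1+1)/2 = i+1 := by omega
  rw [tval, tval, h1, h2, h3, h4, psum_succ s (i+1), pf, dif_pos hi]
  omega

private lemma tval_lt_succ {k : ℕ} (d : Fin k → ℕ) (s : Fin (k+1) → ℕ) (j : ℕ) :
    tval d s j < tval d s (j+1) := by
  unfold tval
  have A : psum s (j/2+1) ≤ psum s ((j+1)/2+1) := psum_mono s (by omega)
  have B : psum d ((j+1)/2) ≤ psum d ((j+1+1)/2) := psum_mono d (by omega)
  omega

private lemma tval_strictMono {k : ℕ} (d : Fin k → ℕ) (s : Fin (k+1) → ℕ) :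
    StrictMono (tval d s) :=
  strictMono_nat_of_lt_succ (tval_lt_succ d s)

private lemma tval_le {k : ℕ} (d : Fin k → ℕ) (s : Fin (k+1) → ℕ) (j : ℕ) :
    tval d s j ≤ j + (∑ i : Fin (k+1), s i) + (∑ i : Fin k, d i) := by
  unfold tval
  have A := psum_le s (j/2+1)
  have B := psum_le d ((j+1)/2)
  omega

private lemma tval_last {k : ℕ} (d : Fin k → ℕ) (s : Fin (k+1) → ℕ) (hk : 1 ≤ k) :
    tval d s (2*k-1) = (2*k-1) + psum s k + psum d k := by
  have h1 : (2*k-1)/2 + 1 = k := by omega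
  have h2 : (2*k-1+1)/2 = k := by omega
  rw [tval, h1, h2]

private def Uf (n : ℕ) {c : ℕ} (t : Fin c → Fin n) (m : ℕ) : ℕ :=
  if m = 0 then 0 else if h : m - 1 < c then ((t ⟨m-1, h⟩ : Fin n) : ℕ) + 1 else n + 1

private lemma Uf_zero (n : ℕ) {c : ℕ} (t : Fin c → Fin n) : Uf n t 0 = 0 := by simp [Uf]

private lemma Uf_eq (n : ℕ) {c : ℕ} (t : Fin c → Fin n) (m r : ℕ) (hr : r < c)
    (hm : m = r + 1) : Uf n t m = (t ⟨r, hr⟩ : ℕ) + 1 := by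
  subst hm
  rw [Uf, if_neg (Nat.succ_ne_zero r), dif_pos (show r+1-1 < c by simpa using hr)]
  exact congrArg (fun x => (t x : ℕ) + 1) (Fin.ext (Nat.succ_sub_one r))

private lemma Uf_big (n : ℕ) {c : ℕ} (t : Fin c → Fin n) (m : ℕ) (hm : c < m) :
    Uf n t m = n + 1 := by
  rw [Uf, if_neg (by omega), dif_neg (by omega)]

private lemma Uf_mono (n : ℕ) {c : ℕ} (t : Fin c → Fin n) (ht : StrictMono t) :
    Monotone (Uf n t) := by
  apply monotone_nat_of_le_succ
  intro m
  rcases Nat.eq_zero_or_pos m with rfl | hm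
  · rw [Uf_zero]; exact Nat.zero_le _
  · by_cases h : m - 1 < c
    · by_cases h' : m < c
      · rw [Uf_eq n t m (m-1) h (by omega), Uf_eq n t (m+1) m h' (by omega)]
        have h2 : t ⟨m-1, h⟩ < t ⟨m, h'⟩ := ht (Fin.mk_lt_mk.mpr (by omega))
        have h3 : (t ⟨m-1, h⟩ : ℕ) < (t ⟨m, h'⟩ : ℕ) := h2
        omega
      · rw [Uf_eq n t m (m-1) h (by omega), Uf_big n t (m+1) (by omega)]
        have := (t ⟨m-1, h⟩).isLt
        omega
    · rw [Uf_big n t m (by omega), Uf_big n t (m+1) (by omega)]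

private lemma sum_range_odd_split (N : ℕ) (f : ℕ → ℕ) :
    ∑ m ∈ Finset.range (2*N+1), f m
      = f 0 + ∑ i ∈ Finset.range N, (f (2*i+1) + f (2*i+2)) := by
  induction N with
  | zero => simp
  | succ p ih =>
    have h2 : 2*(p+1)+1 = (2*p+1)+1+1 := by ring
    rw [h2, Finset.sum_range_succ, Finset.sum_range_succ, ih, Finset.sum_range_succ]
    omega

/-- The Jordan–Wigner qubit locality of a `2k`-element subset of `{0,…,n-1}`, given by its
increasing enumeration `t : Fin (2k) → Fin n`: `loc(T) = ∑_{i=1}^{k} (t_{2i} - t_{2i-1} + 1)`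
(pairs of consecutive entries, `0`-indexed as `(t(2i), t(2i+1))`). -/
def loc {n k : ℕ} (t : Fin (2*k) → Fin n) : ℕ :=
  ∑ i : Fin k,
    ((t ⟨2*(i:ℕ)+1, by have := i.isLt; omega⟩).val
      - (t ⟨2*(i:ℕ), by have := i.isLt; omega⟩).val + 1)

private def Dmap (n : ℕ) {k : ℕ} (t : Fin (2*k) → Fin n) (i : Fin k) : ℕ :=
  Uf n t (2*(i:ℕ)+2) - Uf n t (2*(i:ℕ)+1) - 1

private def Smap (n : ℕ) {k : ℕ} (t : Fin (2*k) → Fin n) (i : Fin (k+1)) : ℕ :=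
  Uf n t (2*(i:ℕ)+1) - Uf n t (2*(i:ℕ)) - 1

private lemma sum_Dmap {n k ℓ : ℕ} (t : Fin (2*k) → Fin n) (ht : StrictMono t)
    (hloc : loc t = ℓ) : (∑ i : Fin k, Dmap n t i) + 2*k = ℓ := by
  have h1 : ∑ i : Fin k, (Dmap n t i + 2) = ℓ := by
    rw [← hloc, loc]
    refine Finset.sum_congr rfl fun i _ => ?_
    have hA : 2*(i:ℕ) < 2*k := by have := i.isLt; omega
    have hB : 2*(i:ℕ)+1 < 2*k := by have := i.isLt; omega
    have u1 : Uf n t (2*(i:ℕ)+1) = (t ⟨2*(i:ℕ), hA⟩ : ℕ) + 1 := Uf_eq n t _ _ hA rfl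
    have u2 : Uf n t (2*(i:ℕ)+2) = (t ⟨2*(i:ℕ)+1, hB⟩ : ℕ) + 1 := Uf_eq n t _ _ hB rfl
    have hlt : (t ⟨2*(i:ℕ), hA⟩ : ℕ) < (t ⟨2*(i:ℕ)+1, hB⟩ : ℕ) :=
      ht (Fin.mk_lt_mk.mpr (by omega))
    rw [Dmap, u1, u2]
    omega
  have h2 : ∑ i : Fin k, (Dmap n t i + 2) = (∑ i : Fin k, Dmap n t i) + 2*k := by
    rw [Finset.sum_add_distrib, Finset.sum_const, Finset.card_univ, Fintype.card_fin,
      smul_eq_mul]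
    ring
  omega

private lemma sum_Smap {n k ℓ : ℕ} (t : Fin (2*k) → Fin n) (ht : StrictMono t)
    (hk : 1 ≤ k) (hloc : loc t = ℓ) (hℓ2 : ℓ ≤ n) :
    ∑ i : Fin (k+1), Smap n t i = n - ℓ := by
  have hD := sum_Dmap t ht hloc
  have htel := Finset.sum_range_tsub (Uf_mono n t ht) (2*k+1)
  rw [Uf_big n t (2*k+1) (by omega), Uf_zero, Nat.sub_zero,
    sum_range_odd_split (N := k) (f := fun m => Uf n t (m+1) - Uf n t m)] at htel
  have htel2 : (Uf n t 1 - Uf n t 0)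
      + (∑ i ∈ Finset.range k,
          ((Uf n t (2*i+2) - Uf n t (2*i+1)) + (Uf n t (2*i+3) - Uf n t (2*i+2)))) = n+1 := htel
  have hfin : ∑ i ∈ Finset.range k,
        ((Uf n t (2*i+2) - Uf n t (2*i+1)) + (Uf n t (2*i+3) - Uf n t (2*i+2)))
      = ∑ i : Fin k,
        ((Uf n t (2*(i:ℕ)+2) - Uf n t (2*(i:ℕ)+1)) + (Uf n t (2*(i:ℕ)+3) - Uf n t (2*(i:ℕ)+2))) :=
    (Fin.sum_univ_eq_sum_range _ k).symm
  rw [hfin] at htel2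
  have hstep : ∑ i : Fin k,
        ((Uf n t (2*(i:ℕ)+2) - Uf n t (2*(i:ℕ)+1)) + (Uf n t (2*(i:ℕ)+3) - Uf n t (2*(i:ℕ)+2)))
      = ∑ i : Fin k, (Dmap n t i + Smap n t i.succ + 2) := by
    refine Finset.sum_congr rfl fun i _ => ?_
    have hA : 2*(i:ℕ) < 2*k := by have := i.isLt; omega
    have hB : 2*(i:ℕ)+1 < 2*k := by have := i.isLt; omega
    have u1 : Uf n t (2*(i:ℕ)+1) = (t ⟨2*(i:ℕ), hA⟩ : ℕ) + 1 := Uf_eq n t _ _ hA rfl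
    have u2 : Uf n t (2*(i:ℕ)+2) = (t ⟨2*(i:ℕ)+1, hB⟩ : ℕ) + 1 := Uf_eq n t _ _ hB rfl
    have hlt : (t ⟨2*(i:ℕ), hA⟩ : ℕ) < (t ⟨2*(i:ℕ)+1, hB⟩ : ℕ) :=
      ht (Fin.mk_lt_mk.mpr (by omega))
    have hDi : Dmap n t i = Uf n t (2*(i:ℕ)+2) - Uf n t (2*(i:ℕ)+1) - 1 := rfl
    have hSi : Smap n t i.succ = Uf n t (2*(i:ℕ)+3) - Uf n t (2*(i:ℕ)+2) - 1 := rfl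
    by_cases hc : 2*(i:ℕ)+2 < 2*k
    · have u3 : Uf n t (2*(i:ℕ)+3) = (t ⟨2*(i:ℕ)+2, hc⟩ : ℕ) + 1 :=
        Uf_eq n t _ _ hc (by omega)
      have hlt2 : (t ⟨2*(i:ℕ)+1, hB⟩ : ℕ) < (t ⟨2*(i:ℕ)+2, hc⟩ : ℕ) :=
        ht (Fin.mk_lt_mk.mpr (by omega))
      rw [hDi, hSi, u1, u2, u3]
      omega
    · have u3 : Uf n t (2*(i:ℕ)+3) = n + 1 := Uf_big n t _ (by omega)
      have hbig : (t ⟨2*(i:ℕ)+1, hB⟩ : ℕ) < n := (t ⟨2*(i:ℕ)+1, hB⟩).isLt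
      rw [hDi, hSi, u1, u2, u3]
      omega
  rw [hstep] at htel2
  have hsplit2 : ∑ i : Fin k, (Dmap n t i + Smap n t i.succ + 2)
      = (∑ i : Fin k, Dmap n t i) + (∑ i : Fin k, Smap n t i.succ) + 2*k := by
    rw [Finset.sum_add_distrib, Finset.sum_add_distrib, Finset.sum_const, Finset.card_univ,
      Fintype.card_fin, smul_eq_mul]
    ring
  rw [hsplit2] at htel2
  have hz : (0:ℕ) < 2*k := by omega
  have hu1 : Uf n t 1 = (t ⟨0, hz⟩ : ℕ) + 1 := Uf_eq n t _ _ hz rfl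
  have hu0 : Uf n t 0 = 0 := Uf_zero n t
  have hS0 : Smap n t 0 = Uf n t 1 - Uf n t 0 - 1 := rfl
  rw [Fin.sum_univ_succ]
  have hbound : (t ⟨0, hz⟩ : ℕ) < n := (t ⟨0, hz⟩).isLt
  omega

private def tfun (n : ℕ) {k : ℕ} (d : Fin k → ℕ) (s : Fin (k+1) → ℕ)
    (hb : ∀ j : ℕ, j < 2*k → tval d s j < n) : Fin (2*k) → Fin n :=
  fun j => ⟨tval d s (j:ℕ), hb _ j.isLt⟩

private lemma tfun_strictMono (n : ℕ) {k : ℕ} (d : Fin k → ℕ) (s : Fin (k+1) → ℕ)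
    (hb : ∀ j : ℕ, j < 2*k → tval d s j < n) : StrictMono (tfun n d s hb) := by
  intro a b hab
  exact tval_strictMono d s (show (a:ℕ) < (b:ℕ) from hab)

private lemma tval_bound {n k ℓ : ℕ} (d : Fin k → ℕ) (s : Fin (k+1) → ℕ)
    (hd : (∑ i : Fin k, d i) = ℓ - 2*k) (hs : (∑ i : Fin (k+1), s i) = n - ℓ)
    (hℓ1 : 2*k ≤ ℓ) (hℓ2 : ℓ ≤ n) (hk : 1 ≤ k) :
    ∀ j : ℕ, j < 2*k → tval d s j < n := by
  intro j hj
  have := tval_le d s j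
  omega

private lemma loc_tfun {n k ℓ : ℕ} (d : Fin k → ℕ) (s : Fin (k+1) → ℕ)
    (hb : ∀ j : ℕ, j < 2*k → tval d s j < n)
    (hd : (∑ i : Fin k, d i) = ℓ - 2*k) (hℓ1 : 2*k ≤ ℓ) :
    loc (tfun n d s hb) = ℓ := by
  rw [loc]
  have h1 : ∑ i : Fin k,
      (((tfun n d s hb) ⟨2*(i:ℕ)+1, by have := i.isLt; omega⟩).val
        - ((tfun n d s hb) ⟨2*(i:ℕ), by have := i.isLt; omega⟩).val + 1)
      = ∑ i : Fin k, (d i + 2) := by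
    refine Finset.sum_congr rfl fun i _ => ?_
    have ho := tval_odd d s (i:ℕ) i.isLt
    have hv1 : ((tfun n d s hb) ⟨2*(i:ℕ)+1, by have := i.isLt; omega⟩).val
        = tval d s (2*(i:ℕ)+1) := rfl
    have hv2 : ((tfun n d s hb) ⟨2*(i:ℕ), by have := i.isLt; omega⟩).val
        = tval d s (2*(i:ℕ)) := rfl
    have he : d ⟨(i:ℕ), i.isLt⟩ = d i := rfl
    omega
  rw [h1]
  have h2 : ∑ i : Fin k, (d i + 2) = (∑ i : Fin k, d i) + 2*k := by
    rw [Finset.sum_add_distrib, Finset.sum_const, Finset.card_univ, Fintype.card_fin,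
      smul_eq_mul]
    ring
  omega

private lemma Uf_tfun (n : ℕ) {k : ℕ} (d : Fin k → ℕ) (s : Fin (k+1) → ℕ)
    (hb : ∀ j : ℕ, j < 2*k → tval d s j < n) (m r : ℕ) (hr : r < 2*k) (hm : m = r + 1) :
    Uf n (tfun n d s hb) m = tval d s r + 1 := by
  rw [Uf_eq n _ m r hr hm]
  rfl

private lemma Dmap_tfun {n k : ℕ} (d : Fin k → ℕ) (s : Fin (k+1) → ℕ)
    (hb : ∀ j : ℕ, j < 2*k → tval d s j < n) :
    Dmap n (tfun n d s hb) = d := by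
  funext i
  have hA : 2*(i:ℕ) < 2*k := by have := i.isLt; omega
  have hB : 2*(i:ℕ)+1 < 2*k := by have := i.isLt; omega
  have u1 : Uf n (tfun n d s hb) (2*(i:ℕ)+1) = tval d s (2*(i:ℕ)) + 1 :=
    Uf_tfun n d s hb _ _ hA rfl
  have u2 : Uf n (tfun n d s hb) (2*(i:ℕ)+2) = tval d s (2*(i:ℕ)+1) + 1 :=
    Uf_tfun n d s hb _ _ hB rfl
  have ho := tval_odd d s (i:ℕ) i.isLt
  have he : d ⟨(i:ℕ), i.isLt⟩ = d i := rfl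
  have hD : Dmap n (tfun n d s hb) i
      = Uf n (tfun n d s hb) (2*(i:ℕ)+2) - Uf n (tfun n d s hb) (2*(i:ℕ)+1) - 1 := rfl
  omega

private lemma Smap_tfun {n k ℓ : ℕ} (d : Fin k → ℕ) (s : Fin (k+1) → ℕ)
    (hb : ∀ j : ℕ, j < 2*k → tval d s j < n)
    (hd : (∑ i : Fin k, d i) = ℓ - 2*k) (hs : (∑ i : Fin (k+1), s i) = n - ℓ)
    (hℓ1 : 2*k ≤ ℓ) (hℓ2 : ℓ ≤ n) (hk : 1 ≤ k) :
    Smap n (tfun n d s hb) = s := by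
  funext i
  obtain ⟨v, hv⟩ := i
  have hS : Smap n (tfun n d s hb) ⟨v, hv⟩
      = Uf n (tfun n d s hb) (2*v+1) - Uf n (tfun n d s hb) (2*v) - 1 := rfl
  rcases Nat.eq_zero_or_pos v with rfl | hv0
  · -- v = 0
    have u1 : Uf n (tfun n d s hb) (2*0+1) = tval d s 0 + 1 :=
      Uf_tfun n d s hb _ _ (by omega) (by omega)
    have u0 : Uf n (tfun n d s hb) (2*0) = 0 := Uf_zero n _
    have hz := tval_zero d s
    have he : s ⟨0, Nat.succ_pos k⟩ = s ⟨0, hv⟩ := rfl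
    omega
  · by_cases hvk : v = k
    · subst hvk
      have u1 : Uf n (tfun n d s hb) (2*v+1) = n + 1 := Uf_big n _ _ (by omega)
      have u0 : Uf n (tfun n d s hb) (2*v) = tval d s (2*v-1) + 1 :=
        Uf_tfun n d s hb _ _ (by omega) (by omega)
      have hlast := tval_last d s (by omega)
      have hps : psum s (v+1) = psum s v + pf s v := psum_succ s v
      have hpf : pf s v = s ⟨v, hv⟩ := by rw [pf, dif_pos hv]
      have hpt : psum s (v+1) = ∑ i : Fin (v+1), s i := psum_total s
      have hpd : psum d v = ∑ i : Fin v, d i := psum_total d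
      rw [hpt, hs] at hps
      rw [hd] at hpd
      have hple : psum s v ≤ n - ℓ := by omega
      omega
    · -- 0 < v < k
      obtain ⟨w, rfl⟩ : ∃ w, v = w + 1 := ⟨v - 1, by omega⟩
      have hwk : w + 1 < k + 1 := by omega
      have u1 : Uf n (tfun n d s hb) (2*(w+1)+1) = tval d s (2*w+2) + 1 :=
        Uf_tfun n d s hb _ _ (by omega) (by omega)
      have u0 : Uf n (tfun n d s hb) (2*(w+1)) = tval d s (2*w+1) + 1 :=
        Uf_tfun n d s hb _ _ (by omega) (by omega)
      have he := tval_even d s w hwk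
      have hee : s ⟨w+1, hwk⟩ = s ⟨w+1, hv⟩ := rfl
      omega

private lemma tval_recon {n k : ℕ} (t : Fin (2*k) → Fin n) (ht : StrictMono t) :
    ∀ j : ℕ, ∀ hj : j < 2*k, tval (Dmap n t) (Smap n t) j = (t ⟨j, hj⟩ : ℕ) := by
  have H : ∀ i : ℕ, ∀ hi : i < k,
      tval (Dmap n t) (Smap n t) (2*i) = (t ⟨2*i, by omega⟩ : ℕ)
      ∧ tval (Dmap n t) (Smap n t) (2*i+1) = (t ⟨2*i+1, by omega⟩ : ℕ) := by
    intro i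
    induction i with
    | zero =>
      intro h0
      have hzA : 2*0 < 2*k := by omega
      have hzB : 2*0+1 < 2*k := by omega
      have hz : tval (Dmap n t) (Smap n t) (2*0) = Smap n t ⟨0, Nat.succ_pos k⟩ :=
        tval_zero (Dmap n t) (Smap n t)
      have hS : Smap n t ⟨0, Nat.succ_pos k⟩ = Uf n t (2*0+1) - Uf n t (2*0) - 1 := rfl
      have u1 : Uf n t (2*0+1) = (t ⟨2*0, hzA⟩ : ℕ) + 1 := Uf_eq n t _ _ hzA (by omega)
      have u0 : Uf n t (2*0) = 0 := Uf_zero n t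
      have h1 : tval (Dmap n t) (Smap n t) (2*0) = (t ⟨2*0, hzA⟩ : ℕ) := by omega
      refine ⟨h1, ?_⟩
      have ho := tval_odd (Dmap n t) (Smap n t) 0 h0
      have hD : Dmap n t ⟨0, h0⟩ = Uf n t (2*0+2) - Uf n t (2*0+1) - 1 := rfl
      have u2 : Uf n t (2*0+2) = (t ⟨2*0+1, hzB⟩ : ℕ) + 1 := Uf_eq n t _ _ hzB (by omega)
      have hlt : (t ⟨2*0, hzA⟩ : ℕ) < (t ⟨2*0+1, hzB⟩ : ℕ) :=
        ht (Fin.mk_lt_mk.mpr (by omega))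
      omega
    | succ i ih =>
      intro hi1
      obtain ⟨ih0, ih1⟩ := ih (by omega)
      have hA : 2*i+1 < 2*k := by omega
      have hB : 2*(i+1) < 2*k := by omega
      have hC : 2*(i+1)+1 < 2*k := by omega
      have he : tval (Dmap n t) (Smap n t) (2*(i+1))
          = tval (Dmap n t) (Smap n t) (2*i+1) + Smap n t ⟨i+1, by omega⟩ + 1 :=
        tval_even (Dmap n t) (Smap n t) i (by omega)
      have hSv : Smap n t ⟨i+1, by omega⟩
          = Uf n t (2*(i+1)+1) - Uf n t (2*(i+1)) - 1 := rfl
      have u1 : Uf n t (2*(i+1)+1) = (t ⟨2*(i+1), hB⟩ : ℕ) + 1 := Uf_eq n t _ _ hB (by omega)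
      have u0 : Uf n t (2*(i+1)) = (t ⟨2*i+1, hA⟩ : ℕ) + 1 := Uf_eq n t _ _ hA (by omega)
      have hlt : (t ⟨2*i+1, hA⟩ : ℕ) < (t ⟨2*(i+1), hB⟩ : ℕ) :=
        ht (Fin.mk_lt_mk.mpr (by omega))
      have h1 : tval (Dmap n t) (Smap n t) (2*(i+1)) = (t ⟨2*(i+1), hB⟩ : ℕ) := by omega
      refine ⟨h1, ?_⟩
      have ho : tval (Dmap n t) (Smap n t) (2*(i+1)+1)
          = tval (Dmap n t) (Smap n t) (2*(i+1)) + Dmap n t ⟨i+1, hi1⟩ + 1 :=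
        tval_odd (Dmap n t) (Smap n t) (i+1) hi1
      have hD : Dmap n t ⟨i+1, hi1⟩
          = Uf n t (2*(i+1)+2) - Uf n t (2*(i+1)+1) - 1 := rfl
      have u2 : Uf n t (2*(i+1)+2) = (t ⟨2*(i+1)+1, hC⟩ : ℕ) + 1 := Uf_eq n t _ _ hC (by omega)
      have hlt2 : (t ⟨2*(i+1), hB⟩ : ℕ) < (t ⟨2*(i+1)+1, hC⟩ : ℕ) :=
        ht (Fin.mk_lt_mk.mpr (by omega))
      omega
  intro j hj
  rcases Nat.even_or_odd j with ⟨r, rfl⟩ | ⟨r, rfl⟩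
  · have hr : r < k := by omega
    have h2 : r + r = 2*r := by omega
    obtain ⟨h1, -⟩ := H r hr
    have hb : tval (Dmap n t) (Smap n t) (r+r) = tval (Dmap n t) (Smap n t) (2*r) := by
      rw [h2]
    rw [hb, h1]
    exact congrArg (fun x => (t x : ℕ)) (Fin.ext (show 2*r = r+r by omega))
  · have hr : r < k := by omega
    obtain ⟨-, h1⟩ := H r hr
    rw [h1]

/-- For `k ≥ 1`, `n ≥ 2k`, and `2k ≤ ℓ ≤ n`, the number of `2k`-element subsets `T` of
`{0,…,n-1}` (identified with strictly increasing tuples `t : Fin (2k) → Fin n`) with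
`loc(T) = ℓ` equals `C(ℓ-k-1, k-1) · C(n+k-ℓ, k)`. -/
theorem count_subsets_with_locality
    (k n ℓ : ℕ) (hk : 1 ≤ k) (hn : 2*k ≤ n) (hℓ1 : 2*k ≤ ℓ) (hℓ2 : ℓ ≤ n) :
    (Finset.univ.filter
        (fun t : {f : Fin (2*k) → Fin n // StrictMono f} => loc t.1 = ℓ)).card =
      (ℓ - k - 1).choose (k - 1) * (n + k - ℓ).choose k := by
  classical
  have hkey : (Finset.univ.filter
        (fun t : {f : Fin (2*k) → Fin n // StrictMono f} => loc t.1 = ℓ)).card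
      = ((Finset.Nat.antidiagonalTuple k (ℓ - 2*k))
          ×ˢ (Finset.Nat.antidiagonalTuple (k+1) (n - ℓ))).card := by
    refine Finset.card_bij'
      (fun a _ => (Dmap n a.1, Smap n a.1))
      (fun p hp => ⟨tfun n p.1 p.2 (tval_bound p.1 p.2
          (Finset.Nat.mem_antidiagonalTuple.mp (Finset.mem_product.mp hp).1)
          (Finset.Nat.mem_antidiagonalTuple.mp (Finset.mem_product.mp hp).2) hℓ1 hℓ2 hk),
        tfun_strictMono n p.1 p.2 _⟩)
      ?_ ?_ ?_ ?_
    · intro a ha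
      rw [Finset.mem_filter] at ha
      rw [Finset.mem_product]
      constructor
      · refine Finset.Nat.mem_antidiagonalTuple.mpr ?_
        show (∑ i : Fin k, Dmap n a.1 i) = ℓ - 2*k
        have := sum_Dmap a.1 a.2 ha.2
        omega
      · exact Finset.Nat.mem_antidiagonalTuple.mpr (sum_Smap a.1 a.2 hk ha.2 hℓ2)
    · intro p hp
      rw [Finset.mem_filter]
      have hd := Finset.Nat.mem_antidiagonalTuple.mp (Finset.mem_product.mp hp).1
      have hs := Finset.Nat.mem_antidiagonalTuple.mp (Finset.mem_product.mp hp).2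
      exact ⟨Finset.mem_univ _,
        loc_tfun p.1 p.2 (tval_bound p.1 p.2 hd hs hℓ1 hℓ2 hk) hd hℓ1⟩
    · intro a ha
      rw [Finset.mem_filter] at ha
      apply Subtype.ext
      funext j
      apply Fin.ext
      exact tval_recon a.1 a.2 (j:ℕ) j.isLt
    · intro p hp
      have hd := Finset.Nat.mem_antidiagonalTuple.mp (Finset.mem_product.mp hp).1
      have hs := Finset.Nat.mem_antidiagonalTuple.mp (Finset.mem_product.mp hp).2
      exact Prod.ext (Dmap_tfun p.1 p.2 (tval_bound p.1 p.2 hd hs hℓ1 hℓ2 hk))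
        (Smap_tfun p.1 p.2 (tval_bound p.1 p.2 hd hs hℓ1 hℓ2 hk) hd hs hℓ1 hℓ2 hk)
  rw [hkey, Finset.card_product, adt_card, adt_card]
  have e1 : ℓ - 2*k + k - 1 = ℓ - k - 1 := by omega
  have e3 : n - ℓ + (k+1) - 1 = n + k - ℓ := by omega
  rw [e1, e3]
  have h2 : k - 1 ≤ ℓ - k - 1 := by omega
  have e2 := Nat.choose_symm h2
  have e2' : ℓ - k - 1 - (k - 1) = ℓ - 2*k := by omega
  rw [e2'] at e2
  have h4 : k ≤ n + k - ℓ := by omega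
  have e4 := Nat.choose_symm h4
  have e4' : n + k - ℓ - k = n - ℓ := by omega
  rw [e4'] at e4
  rw [e2, e4]
end

section
/- Let k ≥ 1 and n ≥ 2k be integers. Then 9^{−k} · binom(n−k, k) ≤ Σ_T 3^{−loc(T)} ≤ 6^{−k} · binom(n−k, k), where the sum runs over all 2k-element subsets T of {0,…,n−1}. (Dividing by binom(n,2k), this says the average of 3^{−loc(T)} over a uniformly random 2k-subset T lies between 9^{−k}·binom(n−k,k)/binom(n,2k) and (3/2)^k·9^{−k}·binom(n−k,k)/binom(n,2k), which yields the O(n^k) bound on the squared shadow norm of the number-conserving ensemble.) -/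
open Classical

section Aux

variable {k n : ℕ} (t : Fin (2*k) → Fin n)

/-- excess of the i-th pair -/
def mf (t : Fin (2*k) → Fin n) (j : ℕ) : ℕ :=
  if h : j < k then (t ⟨2*j+1, by omega⟩).val - (t ⟨2*j, by omega⟩).val - 1 else 0

/-- offset -/
def Sf (t : Fin (2*k) → Fin n) (i : ℕ) : ℕ := i + ∑ j ∈ Finset.range i, mf t j

/-- compressed start -/
def wf (t : Fin (2*k) → Fin n) (i : ℕ) : ℕ :=
  (if h : i < k then (t ⟨2*i, by omega⟩).val else 0) - Sf t i

lemma t_congr (a b : ℕ) (ha : a < 2*k) (hb : b < 2*k) (h : a = b) :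
    (t ⟨a, ha⟩).val = (t ⟨b, hb⟩).val := by subst h; rfl

lemma tlt (ht : StrictMono t) (i : ℕ) (h1 : 2*i < 2*k) (h2 : 2*i+1 < 2*k) :
    (t ⟨2*i, h1⟩).val < (t ⟨2*i+1, h2⟩).val := ht (by simp [Fin.lt_def])

lemma tlt2 (ht : StrictMono t) (i : ℕ) (h1 : 2*i+1 < 2*k) (h2 : 2*i+2 < 2*k) :
    (t ⟨2*i+1, h1⟩).val < (t ⟨2*i+2, h2⟩).val := ht (by simp [Fin.lt_def])

lemma mf_eq (ht : StrictMono t) (i : ℕ) (h : i < k) (h1 : 2*i < 2*k) (h2 : 2*i+1 < 2*k) :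
    (t ⟨2*i+1, h2⟩).val = (t ⟨2*i, h1⟩).val + mf t i + 1 := by
  have := tlt t ht i h1 h2
  rw [mf, dif_pos h]
  omega

lemma Sf_succ (i : ℕ) : Sf t (i+1) = Sf t i + mf t i + 1 := by
  rw [Sf, Sf, Finset.sum_range_succ]; ring

lemma Sf_le (ht : StrictMono t) (i : ℕ) (h : i < k) (h1 : 2*i < 2*k) : Sf t i ≤ (t ⟨2*i, h1⟩).val := by
  induction i with
  | zero => simp [Sf]
  | succ i ih =>
    have hik : i < k := by omega
    have h1' : 2*i < 2*k := by omega
    have h2' : 2*i+1 < 2*k := by omega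
    have e1 := mf_eq t ht i hik h1' h2'
    have e2 := tlt2 t ht i h2' (by omega)
    have := ih hik h1'
    have e0 := t_congr t (2*(i+1)) (2*i+2) h1 (by omega) (by ring)
    rw [Sf_succ]
    omega

lemma wf_eq (ht : StrictMono t) (i : ℕ) (h : i < k) (h1 : 2*i < 2*k) :
    (t ⟨2*i, h1⟩).val = wf t i + Sf t i := by
  have := Sf_le t ht i h h1
  rw [wf, dif_pos h]
  omega

lemma wf_adj (ht : StrictMono t) (i : ℕ) (h : i+1 < k) : wf t i < wf t (i+1) := by
  have e1 := wf_eq t ht i (by omega) (by omega)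
  have e2 := wf_eq t ht (i+1) h (by omega)
  have e3 := mf_eq t ht i (by omega) (by omega) (by omega)
  have e4 := tlt2 t ht i (by omega) (by omega)
  have e5 := Sf_succ t i
  have e0 := t_congr t (2*(i+1)) (2*i+2) (by omega) (by omega) (by ring)
  omega

lemma wf_lt_of_lt (ht : StrictMono t) : ∀ {i j}, i < j → j < k → wf t i < wf t j := by
  intro i j hij hjk
  induction j with
  | zero => omega
  | succ j ih =>
    rcases Nat.lt_or_ge i j with h | h
    · exact (ih h (by omega)).trans (wf_adj t ht j hjk)
    · have : i = j := by omega
      subst this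
      exact wf_adj t ht i hjk

lemma Sf_ge (i : ℕ) : i ≤ Sf t i := Nat.le_add_right _ _

lemma wf_top (ht : StrictMono t) (hk : 1 ≤ k) (hn : 2*k ≤ n) : wf t (k-1) < n - k := by
  have h : k - 1 < k := by omega
  have e1 := wf_eq t ht (k-1) h (by omega)
  have e2 := mf_eq t ht (k-1) h (by omega) (by omega)
  have e3 : (t ⟨2*(k-1)+1, by omega⟩).val < n := (t _).isLt
  have e4 := Sf_ge t (k-1)
  omega

lemma wf_bound (ht : StrictMono t) (hk : 1 ≤ k) (hn : 2*k ≤ n) (i : ℕ) (h : i < k) : wf t i < n - k := by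
  rcases Nat.lt_or_ge i (k-1) with h' | h'
  · exact (wf_lt_of_lt t ht h' (by omega)).trans (wf_top t ht hk hn)
  · have : i = k - 1 := by omega
    subst this
    exact wf_top t ht hk hn

lemma loc_eq (ht : StrictMono t) : loc t = ∑ i : Fin k, (mf t i.val + 2) := by
  refine Finset.sum_congr rfl fun i _ => ?_
  have := mf_eq t ht i.val i.isLt (by omega) (by omega)
  omega

end Aux

section Iot
variable {k n : ℕ}

def df (w : Fin k → Fin (n-k)) (j : ℕ) : ℕ :=
  if h : j < 2*k then (w ⟨j/2, by omega⟩).val + j/2 + j%2 else 0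

lemma df_even (w : Fin k → Fin (n-k)) (i : ℕ) (h : i < k) :
    df w (2*i) = (w ⟨i, h⟩).val + i := by
  rw [df, dif_pos (by omega)]
  have h2 : (2*i)/2 = i := by omega
  have h3 : (2*i)%2 = 0 := by omega
  simp [h2, h3]

lemma df_odd (w : Fin k → Fin (n-k)) (i : ℕ) (h : i < k) :
    df w (2*i+1) = (w ⟨i, h⟩).val + i + 1 := by
  rw [df, dif_pos (by omega)]
  have h2 : (2*i+1)/2 = i := by omega
  have h3 : (2*i+1)%2 = 1 := by omega
  simp [h2, h3]

lemma df_lt (hk : 1 ≤ k) (hn : 2*k ≤ n) (w : Fin k → Fin (n-k)) (j : ℕ) (h : j < 2*k) :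
    df w j < n := by
  rw [df, dif_pos h]
  have h1 : (w ⟨j/2, by omega⟩).val < n - k := (w _).isLt
  omega

lemma df_adj (w : Fin k → Fin (n-k)) (hw : StrictMono w) (j : ℕ) (h : j+1 < 2*k) :
    df w j < df w (j+1) := by
  rcases Nat.even_or_odd j with ⟨a, ha⟩ | ⟨a, ha⟩
  · have hj : j = 2*a := by omega
    subst hj
    have hak : a < k := by omega
    rw [df_even w a hak, show 2*a+1 = 2*a+1 from rfl, df_odd w a hak]
    omega
  · have hj : j = 2*a+1 := by omega
    subst hj
    have hak : a+1 < k := by omega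
    have e := df_even w (a+1) hak
    rw [show 2*(a+1) = 2*a+1+1 from by ring] at e
    rw [df_odd w a (by omega)]
    have hlt := hw (show (⟨a, by omega⟩ : Fin k) < ⟨a+1, hak⟩ from by simp [Fin.lt_def])
    rw [Fin.lt_def] at hlt
    omega

lemma df_mono (w : Fin k → Fin (n-k)) (hw : StrictMono w) :
    ∀ {i j}, i < j → j < 2*k → df w i < df w j := by
  intro i j hij hjk
  induction j with
  | zero => omega
  | succ j ih =>
    rcases Nat.lt_or_ge i j with h | h
    · exact (ih h (by omega)).trans (df_adj w hw j hjk)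
    · have : i = j := by omega
      subst this
      exact df_adj w hw i hjk

def iot (hk : 1 ≤ k) (hn : 2*k ≤ n) (w : {w : Fin k → Fin (n-k) // StrictMono w}) :
    {f : Fin (2*k) → Fin n // StrictMono f} :=
  ⟨fun j => ⟨df w.1 j.1, df_lt hk hn w.1 j.1 j.isLt⟩, by
    intro j j' hjj
    rw [Fin.lt_def] at hjj ⊢
    exact df_mono w.1 w.2 hjj j'.isLt⟩

lemma iot_inj (hk : 1 ≤ k) (hn : 2*k ≤ n) : Function.Injective (iot (n := n) hk hn) := by
  intro a b h
  apply Subtype.ext; funext i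
  have hik : 2*i.1 < 2*k := by omega
  have h1 : ((iot hk hn a).1 ⟨2*i.1, hik⟩).val = ((iot hk hn b).1 ⟨2*i.1, hik⟩).val := by rw [h]
  have h2 : df a.1 (2*i.1) = df b.1 (2*i.1) := h1
  rw [df_even a.1 i.1 i.isLt, df_even b.1 i.1 i.isLt] at h2
  have : (a.1 ⟨i.1, i.isLt⟩).val = (b.1 ⟨i.1, i.isLt⟩).val := by omega
  exact Fin.ext this

end Iot
lemma card_strictMono_fn (a b : ℕ) :
    Fintype.card {f : Fin a → Fin b // StrictMono f} = b.choose a := by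
  have e : {f : Fin a → Fin b // StrictMono f} ≃ {s : Finset (Fin b) // s.card = a} :=
  { toFun := fun f => ⟨Finset.univ.image f.1, by
      rw [Finset.card_image_of_injective _ f.2.injective, Finset.card_univ, Fintype.card_fin]⟩
    invFun := fun s => ⟨s.1.orderEmbOfFin s.2, (s.1.orderEmbOfFin s.2).strictMono⟩
    left_inv := fun f => by
      ext1
      exact (Finset.orderEmbOfFin_unique _
        (fun i => Finset.mem_image_of_mem f.1 (Finset.mem_univ i)) f.2).symm
    right_inv := fun s => by
      ext1
      apply Finset.coe_injective
      rw [Finset.coe_image, Finset.coe_univ, Set.image_univ]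
      exact Finset.range_orderEmbOfFin s.1 s.2 }
  rw [Fintype.card_congr e, Fintype.card_finset_len, Fintype.card_fin]

lemma geom_bound (N : ℕ) : ∑ j ∈ Finset.range N, ((3:ℝ)⁻¹)^j ≤ 3/2 := by
  have h := hasSum_geometric_of_lt_one (r := (3:ℝ)⁻¹) (by norm_num) (by norm_num)
  have := (Summable.sum_le_tsum (Finset.range N) (fun i _ => by positivity) h.summable).trans_eq h.tsum_eq
  linarith [this, show ((1:ℝ) - 3⁻¹)⁻¹ = 3/2 by norm_num]

/-- For `k ≥ 1` and `n ≥ 2k`, the sum of `3^{-loc(T)}` over all `2k`-element subsets `T`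
of `{0,…,n-1}` (identified with strictly increasing tuples) satisfies
`9^{-k} C(n-k, k) ≤ ∑_T 3^{-loc(T)} ≤ 6^{-k} C(n-k, k)`. -/
theorem sum_three_pow_neg_loc_bounds
    (k n : ℕ) (hk : 1 ≤ k) (hn : 2*k ≤ n) :
    ((9:ℝ) ^ k)⁻¹ * ((n - k).choose k : ℝ) ≤
      (∑ t : {f : Fin (2*k) → Fin n // StrictMono f}, ((3:ℝ) ^ (loc t.1))⁻¹) ∧
    (∑ t : {f : Fin (2*k) → Fin n // StrictMono f}, ((3:ℝ) ^ (loc t.1))⁻¹) ≤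
      ((6:ℝ) ^ k)⁻¹ * ((n - k).choose k : ℝ) := by
  have hcard : Fintype.card {w : Fin k → Fin (n-k) // StrictMono w} = (n - k).choose k :=
    card_strictMono_fn k (n-k)
  constructor
  · -- lower bound
    have h2 : ∑ x ∈ Finset.univ.image (iot hk hn), ((3:ℝ) ^ (loc x.1))⁻¹
        = ∑ w : {w : Fin k → Fin (n-k) // StrictMono w}, ((3:ℝ) ^ (loc (iot hk hn w).1))⁻¹ :=
      Finset.sum_image (fun a _ b _ h => iot_inj hk hn h)
    have hloc : ∀ w : {w : Fin k → Fin (n-k) // StrictMono w}, loc (iot hk hn w).1 = 2*k := by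
      intro w
      rw [loc]
      have : ∀ i : Fin k, df w.1 (2*(i:ℕ)+1) - df w.1 (2*(i:ℕ)) + 1 = 2 := by
        intro i
        rw [df_odd w.1 i.1 i.isLt, df_even w.1 i.1 i.isLt]
        omega
      calc (∑ i : Fin k, (df w.1 (2*(i:ℕ)+1) - df w.1 (2*(i:ℕ)) + 1))
          = ∑ _i : Fin k, 2 := Finset.sum_congr rfl fun i _ => this i
        _ = 2*k := by simp [Finset.sum_const, Finset.card_univ, mul_comm]
    have h3 : ∑ w : {w : Fin k → Fin (n-k) // StrictMono w}, ((3:ℝ) ^ (loc (iot hk hn w).1))⁻¹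
        = ((9:ℝ)^k)⁻¹ * ((n - k).choose k : ℝ) := by
      simp only [hloc]
      rw [Finset.sum_const, Finset.card_univ, hcard, nsmul_eq_mul, pow_mul]
      norm_num [mul_comm]
    calc ((9:ℝ) ^ k)⁻¹ * ((n - k).choose k : ℝ)
        = ∑ x ∈ Finset.univ.image (iot hk hn), ((3:ℝ) ^ (loc x.1))⁻¹ := by rw [h2, h3]
      _ ≤ ∑ t : {f : Fin (2*k) → Fin n // StrictMono f}, ((3:ℝ) ^ (loc t.1))⁻¹ :=
          Finset.sum_le_sum_of_subset_of_nonneg (Finset.subset_univ _)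
            (fun t _ _ => by positivity)
  · -- upper bound
    set F : (Fin k → ℕ) × (Fin k → ℕ) → ℝ := fun p => ∏ i : Fin k, ((3:ℝ)^(p.1 i + 2))⁻¹ with hF
    set Ψ : {f : Fin (2*k) → Fin n // StrictMono f} → (Fin k → ℕ) × (Fin k → ℕ) :=
      fun t => (fun i => mf t.1 i.val, fun i => wf t.1 i.val) with hΨ
    set W : Finset (Fin k → ℕ) :=
      Finset.univ.image
        (fun w : {w : Fin k → Fin (n-k) // StrictMono w} => fun i => (w.1 i).val) with hWdef
    have hgF : ∀ t : {f : Fin (2*k) → Fin n // StrictMono f},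
        ((3:ℝ) ^ (loc t.1))⁻¹ = F (Ψ t) := by
      intro t
      rw [loc_eq t.1 t.2, hF, hΨ]
      rw [← Finset.prod_pow_eq_pow_sum, ← Finset.prod_inv_distrib]
    have hinj : Function.Injective Ψ := by
      intro a b h
      have hm : ∀ i : Fin k, mf a.1 i.val = mf b.1 i.val :=
        fun i => congrFun (congrArg Prod.fst h) i
      have hw : ∀ i : Fin k, wf a.1 i.val = wf b.1 i.val :=
        fun i => congrFun (congrArg Prod.snd h) i
      have hm' : ∀ j, mf a.1 j = mf b.1 j := by
        intro j
        by_cases hj : j < k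
        · exact hm ⟨j, hj⟩
        · simp [mf, hj]
      have hS : ∀ i, Sf a.1 i = Sf b.1 i := by
        intro i
        rw [Sf, Sf]
        congr 1
        exact Finset.sum_congr rfl fun j _ => hm' j
      apply Subtype.ext; funext j
      have hik : j.1/2 < k := by have := j.isLt; omega
      have hj2 : 2*(j.1/2) < 2*k := by have := j.isLt; omega
      have hj2' : 2*(j.1/2)+1 < 2*k := by have := j.isLt; omega
      have hwv : wf a.1 (j.1/2) = wf b.1 (j.1/2) := hw ⟨j.1/2, hik⟩
      have hmv : mf a.1 (j.1/2) = mf b.1 (j.1/2) := hm' _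
      have hSv : Sf a.1 (j.1/2) = Sf b.1 (j.1/2) := hS _
      have hea := wf_eq a.1 a.2 (j.1/2) hik hj2
      have heb := wf_eq b.1 b.2 (j.1/2) hik hj2
      have hma := mf_eq a.1 a.2 (j.1/2) hik hj2 hj2'
      have hmb := mf_eq b.1 b.2 (j.1/2) hik hj2 hj2'
      rcases Nat.even_or_odd j.1 with ⟨c, hc⟩ | ⟨c, hc⟩
      · have hj : j = ⟨2*(j.1/2), hj2⟩ := Fin.ext (by simp; omega)
        have e1 := congrArg (fun x => (a.1 x).val) hj
        have e2 := congrArg (fun x => (b.1 x).val) hj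
        refine Fin.ext ?_
        omega
      · have hj : j = ⟨2*(j.1/2)+1, hj2'⟩ := Fin.ext (by simp; omega)
        have e1 := congrArg (fun x => (a.1 x).val) hj
        have e2 := congrArg (fun x => (b.1 x).val) hj
        refine Fin.ext ?_
        omega
    have key : (∑ t : {f : Fin (2*k) → Fin n // StrictMono f}, ((3:ℝ) ^ (loc t.1))⁻¹)
        = ∑ p ∈ Finset.univ.image Ψ, F p := by
      rw [Finset.sum_image (fun a _ b _ h => hinj h)]
      exact Finset.sum_congr rfl fun t _ => hgF t
    have hsub : Finset.univ.image Ψ ⊆ (Fintype.piFinset fun _ : Fin k => Finset.range n) ×ˢ W := by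
      intro p hp
      rcases Finset.mem_image.1 hp with ⟨t, _, rfl⟩
      rw [Finset.mem_product]
      constructor
      · rw [Fintype.mem_piFinset]
        intro i
        rw [Finset.mem_range]
        have h1 : 2*i.1 < 2*k := by have := i.isLt; omega
        have h2 : 2*i.1+1 < 2*k := by have := i.isLt; omega
        have e := mf_eq t.1 t.2 i.1 i.isLt h1 h2
        have lt := (t.1 ⟨2*i.1+1, h2⟩).isLt
        simp only [hΨ]
        omega
      · refine Finset.mem_image.2 ⟨⟨fun i => ⟨wf t.1 i.val,
          wf_bound t.1 t.2 hk hn i.val i.isLt⟩, ?_⟩, Finset.mem_univ _, rfl⟩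
        intro i j hij
        rw [Fin.lt_def] at hij ⊢
        exact wf_lt_of_lt t.1 t.2 hij j.isLt
    have hWcard : (W.card : ℝ) = ((n - k).choose k : ℝ) := by
      rw [hWdef, Finset.card_image_of_injective _ (fun a b hab => by
        apply Subtype.ext; funext i; exact Fin.ext (congrFun hab i)),
        Finset.card_univ, hcard]
    have hc : ∑ j ∈ Finset.range n, ((3:ℝ)^(j+2))⁻¹ ≤ 6⁻¹ := by
      have e : ∀ j, ((3:ℝ)^(j+2))⁻¹ = 9⁻¹ * ((3:ℝ)⁻¹)^j := by
        intro j
        rw [pow_add, mul_inv, inv_pow]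
        norm_num [mul_comm]
      rw [Finset.sum_congr rfl fun j _ => e j, ← Finset.mul_sum]
      have := geom_bound n
      nlinarith
    have hcnn : (0:ℝ) ≤ ∑ j ∈ Finset.range n, ((3:ℝ)^(j+2))⁻¹ := by positivity
    have hBsum : ∑ p ∈ (Fintype.piFinset fun _ : Fin k => Finset.range n) ×ˢ W, F p
        ≤ ((6:ℝ)^k)⁻¹ * ((n - k).choose k : ℝ) := by
      rw [Finset.sum_product_right]
      calc ∑ w ∈ W, ∑ m ∈ Fintype.piFinset fun _ : Fin k => Finset.range n, F (m, w)
          = ∑ _w ∈ W, (∑ j ∈ Finset.range n, ((3:ℝ)^(j+2))⁻¹)^k := by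
            refine Finset.sum_congr rfl fun w _ => ?_
            have hps := Finset.prod_univ_sum (fun _ : Fin k => Finset.range n)
              (fun _ j => ((3:ℝ)^(j + 2))⁻¹)
            calc ∑ m ∈ Fintype.piFinset (fun _ : Fin k => Finset.range n), F (m, w)
                = ∑ m ∈ Fintype.piFinset (fun _ : Fin k => Finset.range n),
                    ∏ i : Fin k, ((3:ℝ)^(m i + 2))⁻¹ := rfl
              _ = ∏ _i : Fin k, ∑ j ∈ Finset.range n, ((3:ℝ)^(j + 2))⁻¹ := hps.symm
              _ = (∑ j ∈ Finset.range n, ((3:ℝ)^(j+2))⁻¹)^k := by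
                  rw [Finset.prod_const, Finset.card_univ, Fintype.card_fin]
        _ = (W.card : ℝ) * (∑ j ∈ Finset.range n, ((3:ℝ)^(j+2))⁻¹)^k := by
            rw [Finset.sum_const, nsmul_eq_mul]
        _ ≤ ((n - k).choose k : ℝ) * ((6:ℝ)⁻¹)^k := by
            rw [hWcard]
            exact mul_le_mul_of_nonneg_left (pow_le_pow_left₀ hcnn hc k) (by positivity)
        _ = ((6:ℝ)^k)⁻¹ * ((n - k).choose k : ℝ) := by rw [← inv_pow]; ring
    calc (∑ t : {f : Fin (2*k) → Fin n // StrictMono f}, ((3:ℝ) ^ (loc t.1))⁻¹)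
        = ∑ p ∈ Finset.univ.image Ψ, F p := key
      _ ≤ ∑ p ∈ (Fintype.piFinset fun _ : Fin k => Finset.range n) ×ˢ W, F p :=
          Finset.sum_le_sum_of_subset_of_nonneg hsub (fun p _ _ => by positivity)
      _ ≤ ((6:ℝ)^k)⁻¹ * ((n - k).choose k : ℝ) := hBsum
end
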